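/- arXiv:1309.5644 — 5 statements merged into one kernel-verified Lean document; each statement's English description precedes it below -/
import Mathlib

section
/- Let R be a commutative ring, t ∈ R an element that is not a zero divisor, and suppose R is complete with respect to t (i.e., R = lim R/(t^n)). Let k, n ∈ ℕ and f(x) = Σ_{l ≥ k} α_l x^l ∈ R[[x]] be a power series such that the substituted series f(t + y) ∈ R[[y]] lies in the ideal (y^n). Then the leading coefficient α_k is divisible by t^n in R. -/
open Finset

private lemma smod_dvd {R : Type*} [CommRing R] {t x y : R} {m : ℕ} :
    x ≡ y [SMOD ((Ideal.span {t}) ^ m • ⊤ : Submodule R R)] ↔ t ^ m ∣ x - y := by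
  rw [SModEq.sub_mem, Ideal.span_singleton_pow, smul_eq_mul, Ideal.mul_top,
    Ideal.mem_span_singleton]

private lemma cancel_pow {R : Type*} [CommRing R] {t x : R} (ht : t ∈ nonZeroDivisors R)
    {a m : ℕ} (h : t ^ (a + m) ∣ t ^ a * x) : t ^ m ∣ x := by
  obtain ⟨c, hc⟩ := h
  refine ⟨c, (mul_cancel_left_mem_nonZeroDivisors (pow_mem ht a)).mp ?_⟩
  rw [hc, pow_add, mul_assoc]

private lemma cast_hockey {R : Type*} [CommRing R] (j a : ℕ) :
    (∑ l ∈ Ico j a, ((l.choose j : ℕ) : R)) = ((a.choose (j + 1) : ℕ) : R) := by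
  rw [← Nat.cast_sum]
  congr 1
  rcases le_or_gt a j with h | h
  · rw [Finset.Ico_eq_empty (by omega), Nat.choose_eq_zero_of_lt (by omega : a < j + 1)]
    simp
  · have he : Ico j a = Icc j (a - 1) := by
      rw [← Finset.Ico_add_one_right_eq_Icc]; congr 1; omega
    rw [he, Nat.sum_Icc_choose]
    congr 1; omega

private lemma geom_tail {R : Type*} [CommRing R] (t : R) {k : ℕ} {α : ℕ → R}
    (hk : ∀ a, a < k → α a = 0) {l : ℕ} (hl : l ≤ k) (m : ℕ) :
    t ^ l * ∑ i ∈ range m, t ^ i * α (l + i) = ∑ a ∈ range (l + m), t ^ a * α a := by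
  have h0 : ∑ a ∈ range l, t ^ a * α a = 0 := by
    apply Finset.sum_eq_zero
    intro a ha
    rw [hk a (lt_of_lt_of_le (Nat.lt_of_lt_of_le (mem_range.mp ha) le_rfl) hl), mul_zero]
  symm
  rw [Finset.sum_range_add, h0, zero_add, mul_sum]
  apply Finset.sum_congr rfl
  intro i _
  rw [pow_add, mul_assoc]

private lemma key_identity {R : Type*} [CommRing R] (t : R) (α : ℕ → R) (j m : ℕ) :
    ∑ l ∈ Ico j (j + m), (l.choose j : R) * t ^ (l - j) * (∑ i ∈ range m, t ^ i * α (l + 1 + i))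
      = (∑ a ∈ Ico (j + 1) (j + 1 + m), (a.choose (j + 1) : R) * t ^ (a - (j + 1)) * α a)
        + ∑ l ∈ Ico j (j + m), ∑ i ∈ Ico (m - (l - j)) m,
            (l.choose j : R) * t ^ (l - j) * (t ^ i * α (l + 1 + i)) := by
  have step1 : ∀ l ∈ Ico j (j + m),
      (l.choose j : R) * t ^ (l - j) * (∑ i ∈ range m, t ^ i * α (l + 1 + i))
        = (∑ a ∈ Ico (l + 1) (j + m + 1), (l.choose j : R) * (t ^ (a - (j + 1)) * α a))
          + ∑ i ∈ Ico (m - (l - j)) m, (l.choose j : R) * t ^ (l - j) * (t ^ i * α (l + 1 + i)) := by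
    intro l hl
    have hlj : j ≤ l := (mem_Ico.mp hl).1
    have hlm : l < j + m := (mem_Ico.mp hl).2
    rw [mul_sum, range_eq_Ico,
      ← Finset.sum_Ico_consecutive (fun i => (l.choose j : R) * t ^ (l - j) * (t ^ i * α (l + 1 + i)))
        (Nat.zero_le (m - (l - j))) (by omega), ← range_eq_Ico]
    congr 1
    rw [Finset.sum_Ico_eq_sum_range]
    have hcnt : j + m + 1 - (l + 1) = m - (l - j) := by omega
    rw [hcnt]
    apply Finset.sum_congr rfl
    intro i _
    have he : l + 1 + i - (j + 1) = (l - j) + i := by omega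
    rw [he, pow_add]
    ring
  rw [Finset.sum_congr rfl step1, Finset.sum_add_distrib]
  congr 1
  have hext : ∑ l ∈ Ico j (j + m), ∑ a ∈ Ico (l + 1) (j + m + 1),
        (l.choose j : R) * (t ^ (a - (j + 1)) * α a)
      = ∑ l ∈ Ico j (j + m + 1), ∑ a ∈ Ico (l + 1) (j + m + 1),
        (l.choose j : R) * (t ^ (a - (j + 1)) * α a) := by
    rw [Finset.sum_Ico_succ_top (by omega : j ≤ j + m), Finset.Ico_self, Finset.sum_empty,
      add_zero]
  rw [hext, Finset.sum_Ico_Ico_comm']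
  have hstep : ∀ a ∈ Ico j (j + m + 1),
      (∑ l ∈ Ico j a, (l.choose j : R) * (t ^ (a - (j + 1)) * α a))
        = (a.choose (j + 1) : R) * (t ^ (a - (j + 1)) * α a) := by
    intro a _
    rw [← Finset.sum_mul, cast_hockey]
  rw [Finset.sum_congr rfl hstep,
    Finset.sum_eq_sum_Ico_succ_bot (by omega : j < j + m + 1)]
  rw [Nat.choose_eq_zero_of_lt (by omega), Nat.cast_zero, zero_mul, zero_add]
  have : j + m + 1 = j + 1 + m := by omega
  rw [this]
  apply Finset.sum_congr rfl
  intro a _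
  ring

private lemma aux {R : Type*} [CommRing R] (t : R) (ht : t ∈ nonZeroDivisors R)
    (hcomplete : IsAdicComplete (Ideal.span {t}) R) (n : ℕ) :
    ∀ (k : ℕ) (α : ℕ → R), (∀ l, l < k → α l = 0) →
      (∀ j, j < n → ∀ m : ℕ,
        t ^ m ∣ ∑ l ∈ Finset.Ico j (j + m), (Nat.choose l j : R) * t ^ (l - j) * α l) →
      t ^ n ∣ α k := by
  induction n with
  | zero => intro k α _ _; simp
  | succ n ih =>
    intro k α hk hsub
    have hS0 : ∀ M : ℕ, t ^ M ∣ ∑ a ∈ range M, t ^ a * α a := by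
      intro M
      have h := hsub 0 (Nat.succ_pos n) M
      simpa [← range_eq_Ico] using h
    -- construct β l = Σ_{i ≥ 0} t^i α (l+1+i)
    have hex : ∀ l : ℕ, ∃ b : R, ∀ m : ℕ,
        t ^ m ∣ (∑ i ∈ range m, t ^ i * α (l + 1 + i)) - b := by
      intro l
      have hc : ∀ {m m' : ℕ}, m ≤ m' →
          (fun m => ∑ i ∈ range m, t ^ i * α (l + 1 + i)) m
            ≡ (fun m => ∑ i ∈ range m, t ^ i * α (l + 1 + i)) m'
            [SMOD ((Ideal.span {t}) ^ m • ⊤ : Submodule R R)] := by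
        intro m m' hmm'
        rw [smod_dvd]
        show t ^ m ∣ (∑ i ∈ range m, t ^ i * α (l + 1 + i))
          - ∑ i ∈ range m', t ^ i * α (l + 1 + i)
        have hsplit : (∑ i ∈ range m', t ^ i * α (l + 1 + i))
            = (∑ i ∈ range m, t ^ i * α (l + 1 + i)) + ∑ i ∈ Ico m m', t ^ i * α (l + 1 + i) := by
          rw [range_eq_Ico, range_eq_Ico, Finset.sum_Ico_consecutive _ (Nat.zero_le m) hmm']
        rw [hsplit]
        rw [sub_add_cancel_left]
        apply Dvd.dvd.neg_right
        apply Finset.dvd_sum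
        intro i hi
        exact Dvd.dvd.mul_right (pow_dvd_pow t (mem_Ico.mp hi).1) _
      obtain ⟨L, hL⟩ := IsPrecomplete.prec hcomplete.toIsPrecomplete hc
      exact ⟨L, fun m => smod_dvd.mp (hL m)⟩
    choose β hβ using hex
    -- α k = - t * β k
    have hA : α k + t * β k = 0 := by
      apply IsHausdorff.haus hcomplete.toIsHausdorff
      intro m
      rw [smod_dvd, sub_zero]
      set p := ∑ i ∈ range m, t ^ i * α (k + 1 + i) with hp
      have h1 : t ^ (m + 1) ∣ α k + t * p := by
        apply cancel_pow ht (a := k)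
        have hsum : t * p = ∑ i ∈ range m, t ^ (i + 1) * α (k + (i + 1)) := by
          rw [hp, mul_sum]
          apply Finset.sum_congr rfl
          intro i _
          rw [show k + (i + 1) = k + 1 + i from by omega, pow_succ]
          ring
        have heq : t ^ k * (α k + t * p)
            = ∑ a ∈ range (k + (m + 1)), t ^ a * α a := by
          rw [← geom_tail t hk (le_refl k) (m + 1)]
          congr 1
          rw [Finset.sum_range_succ']
          simp only [add_zero, pow_zero, one_mul]
          rw [hsum]
          exact add_comm _ _
        rw [heq]
        exact hS0 (k + (m + 1))
      have h2 : t ^ (m + 1) ∣ t * (p - β k) := by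
        rw [pow_succ']
        exact mul_dvd_mul_left t (hβ k m)
      have h3 := dvd_sub h1 h2
      have he : (α k + t * p) - t * (p - β k) = α k + t * β k := by ring
      rw [he] at h3
      exact dvd_trans (pow_dvd_pow t (Nat.le_succ m)) h3
    -- β vanishes below k
    have hkβ : ∀ l, l < k → β l = 0 := by
      intro l hl
      apply IsHausdorff.haus hcomplete.toIsHausdorff
      intro m
      rw [smod_dvd, sub_zero]
      have hpdvd : t ^ m ∣ ∑ i ∈ range m, t ^ i * α (l + 1 + i) := by
        apply cancel_pow ht (a := l + 1)
        rw [geom_tail t hk (by omega : l + 1 ≤ k) m]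
        exact hS0 (l + 1 + m)
      have h := dvd_sub hpdvd (hβ l m)
      rwa [sub_sub_cancel] at h
    -- β satisfies the substitution hypothesis for n
    have hsubβ : ∀ j, j < n → ∀ m : ℕ,
        t ^ m ∣ ∑ l ∈ Finset.Ico j (j + m), (Nat.choose l j : R) * t ^ (l - j) * β l := by
      intro j hj m
      have hT : (∑ l ∈ Ico j (j + m), (l.choose j : R) * t ^ (l - j) * β l)
          = (∑ l ∈ Ico j (j + m), (l.choose j : R) * t ^ (l - j)
              * (∑ i ∈ range m, t ^ i * α (l + 1 + i)))
            - ∑ l ∈ Ico j (j + m), (l.choose j : R) * t ^ (l - j)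
              * ((∑ i ∈ range m, t ^ i * α (l + 1 + i)) - β l) := by
        rw [← Finset.sum_sub_distrib]
        apply Finset.sum_congr rfl
        intro l _
        ring
      rw [hT, key_identity]
      apply dvd_sub
      · apply dvd_add
        · exact hsub (j + 1) (by omega) m
        · apply Finset.dvd_sum
          intro l hl
          apply Finset.dvd_sum
          intro i hi
          have hlj : j ≤ l := (mem_Ico.mp hl).1
          have hge : m ≤ (l - j) + i := by
            have := (mem_Ico.mp hi).1
            have := (mem_Ico.mp hl).2
            omega
          have he : (l.choose j : R) * t ^ (l - j) * (t ^ i * α (l + 1 + i))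
              = ((l.choose j : R) * α (l + 1 + i)) * t ^ ((l - j) + i) := by
            rw [pow_add]; ring
          rw [he]
          exact Dvd.dvd.mul_left (pow_dvd_pow t hge) _
      · apply Finset.dvd_sum
        intro l _
        exact Dvd.dvd.mul_left (hβ l m) _
    have hn : t ^ n ∣ β k := ih k β hkβ hsubβ
    rw [eq_neg_of_add_eq_zero_left hA]
    apply Dvd.dvd.neg_right
    rw [pow_succ']
    exact mul_dvd_mul_left t hn

/-- Key divisibility lemma, case `r = 1`: if `R` is `t`-adically complete, `t` is not a
zero divisor, and `f(x) = Σ_{l ≥ k} α_l x^l` is such that `f(t+y) ∈ (y^n)`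
(expressed `t`-adically: for each `j < n` the `y^j`-coefficient
`Σ_l C(l,j) t^{l-j} α_l` of `f(t+y)` vanishes, i.e. all its partial sums
`Σ_{j ≤ l < j+m} C(l,j) t^{l-j} α_l` are divisible by `t^m`), then `t^n ∣ α_k`. -/
theorem leading_coeff_dvd_of_subst_in_ideal {R : Type*} [CommRing R]
    (t : R) (ht : t ∈ nonZeroDivisors R)
    (hcomplete : IsAdicComplete (Ideal.span {t}) R)
    (k n : ℕ) (α : ℕ → R)
    (hk : ∀ l, l < k → α l = 0)
    (hsub : ∀ j, j < n → ∀ m : ℕ,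
      t ^ m ∣ ∑ l ∈ Finset.Ico j (j + m), (Nat.choose l j : R) * t ^ (l - j) * α l) :
    t ^ n ∣ α k := by
  exact aux t ht hcomplete n k α hk hsub
end

section
/- Let R be a commutative ring and t_1, …, t_r ∈ R. For natural numbers n_1, …, n_r with N = Σ n_j, consider the N×N matrix A whose rows are indexed by pairs (i, w) with 1 ≤ i ≤ r and 0 ≤ w < n_i, and whose columns indexed by v = 1, …, N, with entry a_{(i,w),v} = C(v-1, w) · t_i^{v-1-w}. Then det(A) = Π_{i > j} (t_i - t_j)^{n_i · n_j}. -/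
open Finset

lemma cv_pow_helper {R : Type*} [CommRing R] (x : R) (a b : ℕ) :
    (Nat.choose a b : R) * x ^ (a + 1 - b) = x * ((Nat.choose a b : R) * x ^ (a - b)) := by
  rcases lt_or_ge a b with h | h
  · rw [Nat.choose_eq_zero_of_lt h]; simp
  · have h2 : a + 1 - b = (a - b) + 1 := by omega
    rw [h2, pow_succ]; ring

lemma cv_uniq {N : ℕ} (r : ℕ) (n : ℕ → ℕ) (idx wt : Fin N → ℕ)
    (hblock : ∀ u : Fin N, idx u < r ∧ wt u < n (idx u) ∧
      (u : ℕ) = (∑ j ∈ Finset.range (idx u), n j) + wt u)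
    (u : Fin N) (i w : ℕ) (hw : w < n i)
    (hu : (u : ℕ) = (∑ j ∈ Finset.range i, n j) + w) :
    idx u = i ∧ wt u = w := by
  obtain ⟨-, h2, h3⟩ := hblock u
  have key : ∀ a b wa : ℕ, wa < n a → a < b →
      (∑ j ∈ Finset.range a, n j) + wa < ∑ j ∈ Finset.range b, n j := by
    intro a b wa hwa hab
    have h1 : (∑ j ∈ Finset.range (a+1), n j) ≤ ∑ j ∈ Finset.range b, n j :=
      Finset.sum_le_sum_of_subset (Finset.range_subset_range.mpr hab)
    rw [Finset.sum_range_succ] at h1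
    omega
  rcases lt_trichotomy (idx u) i with h | h | h
  · have := key (idx u) i (wt u) h2 h
    omega
  · rw [h] at h3
    exact ⟨h, by omega⟩
  · have := key i (idx u) w hw h
    omega

lemma cv_prod {M : Type*} [CommMonoid M] (r : ℕ) (n : ℕ → ℕ) {N : ℕ}
    (hN : (∑ j ∈ Finset.range r, n j) = N) (idx wt : Fin N → ℕ)
    (hblock : ∀ u : Fin N, idx u < r ∧ wt u < n (idx u) ∧
      (u : ℕ) = (∑ j ∈ Finset.range (idx u), n j) + wt u)
    (f : ℕ → ℕ → M) :
    ∏ u : Fin N, f (idx u) (wt u) = ∏ i ∈ Finset.range r, ∏ w ∈ Finset.range (n i), f i w := by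
  rw [Finset.prod_sigma']
  refine (Finset.prod_bij
    (fun (a : Σ _ : ℕ, ℕ) (ha : a ∈ (Finset.range r).sigma fun i => Finset.range (n i)) =>
      (⟨(∑ j ∈ Finset.range a.1, n j) + a.2, ?_⟩ : Fin N)) ?_ ?_ ?_ ?_).symm
  · obtain ⟨h1, h2⟩ := Finset.mem_sigma.mp ha
    rw [Finset.mem_range] at h1 h2
    have hle : (∑ j ∈ Finset.range (a.1+1), n j) ≤ ∑ j ∈ Finset.range r, n j :=
      Finset.sum_le_sum_of_subset (Finset.range_subset_range.mpr h1)
    rw [Finset.sum_range_succ] at hle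
    omega
  · intro a ha; exact Finset.mem_univ _
  · intro a ha b hb hab
    obtain ⟨ha1, ha2⟩ := Finset.mem_sigma.mp ha
    obtain ⟨hb1, hb2⟩ := Finset.mem_sigma.mp hb
    rw [Finset.mem_range] at ha1 ha2 hb1 hb2
    have hval : (∑ j ∈ Finset.range a.1, n j) + a.2 = (∑ j ∈ Finset.range b.1, n j) + b.2 :=
      congrArg Fin.val hab
    -- uniqueness of block decomposition
    have key : ∀ x y wx : ℕ, wx < n x → x < y →
        (∑ j ∈ Finset.range x, n j) + wx < ∑ j ∈ Finset.range y, n j := by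
      intro x y wx hwx hxy
      have h1 : (∑ j ∈ Finset.range (x+1), n j) ≤ ∑ j ∈ Finset.range y, n j :=
        Finset.sum_le_sum_of_subset (Finset.range_subset_range.mpr hxy)
      rw [Finset.sum_range_succ] at h1
      omega
    rcases lt_trichotomy a.1 b.1 with h | h | h
    · have := key a.1 b.1 a.2 ha2 h; omega
    · obtain ⟨a1, a2⟩ := a; obtain ⟨b1, b2⟩ := b
      simp only at h hval ⊢
      subst h
      simp only [add_right_inj] at hval
      simp [hval]
    · have := key b.1 a.1 b.2 hb2 h; omega
  · intro u hu
    obtain ⟨h1, h2, h3⟩ := hblock u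
    refine ⟨⟨idx u, wt u⟩, Finset.mem_sigma.mpr ⟨Finset.mem_range.mpr h1, Finset.mem_range.mpr h2⟩, ?_⟩
    exact Fin.ext h3.symm
  · intro a ha
    obtain ⟨ha1, ha2⟩ := Finset.mem_sigma.mp ha
    rw [Finset.mem_range] at ha1 ha2
    have hlt : (∑ j ∈ Finset.range a.1, n j) + a.2 < N := by
      have hle : (∑ j ∈ Finset.range (a.1+1), n j) ≤ ∑ j ∈ Finset.range r, n j :=
        Finset.sum_le_sum_of_subset (Finset.range_subset_range.mpr ha1)
      rw [Finset.sum_range_succ] at hle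
      omega
    obtain ⟨hi, hw⟩ := cv_uniq r n idx wt hblock ⟨_, hlt⟩ a.1 a.2 ha2 rfl
    rw [hi, hw]

theorem cv_aux {R : Type*} [CommRing R] (r : ℕ) (t : ℕ → R) :
    ∀ N (n : ℕ → ℕ) (idx wt : Fin N → ℕ),
      (∑ j ∈ Finset.range r, n j) = N →
      (∀ u : Fin N, idx u < r ∧ wt u < n (idx u) ∧
        (u : ℕ) = (∑ j ∈ Finset.range (idx u), n j) + wt u) →
      Matrix.det (fun u v : Fin N =>
          (Nat.choose (v : ℕ) (wt u) : R) * t (idx u) ^ ((v : ℕ) - wt u)) =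
        ∏ i ∈ Finset.range r, ∏ j ∈ Finset.range i, (t i - t j) ^ (n i * n j) := by
  intro N
  induction N with
  | zero =>
    intro n idx wt hN hblock
    refine Matrix.det_isEmpty.trans ?_
    have hz : ∀ i ∈ Finset.range r, n i = 0 := by
      intro i hi
      exact (Finset.sum_eq_zero_iff.mp hN) i hi
    refine (Finset.prod_eq_one fun i hi => Finset.prod_eq_one fun j hj => ?_).symm
    rw [hz i hi, zero_mul, pow_zero]
  | succ m ih =>
    intro n idx wt hN hblock
    classical
    obtain ⟨hi0r, hw0lt, hpos0⟩ := hblock 0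
    simp only [Fin.val_zero] at hpos0
    set i₁ := idx 0 with hi₁def
    have hS0 : (∑ j ∈ Finset.range i₁, n j) = 0 := by omega
    have hwt0 : wt 0 = 0 := by omega
    have hz : ∀ j, j < i₁ → n j = 0 := fun j hj =>
      (Finset.sum_eq_zero_iff.mp hS0) j (Finset.mem_range.mpr hj)
    have hn₁ : 0 < n i₁ := by omega
    set n' : ℕ → ℕ := fun j => if j = i₁ then n i₁ - 1 else n j with hn'def
    have hS' : ∀ i, i₁ < i → (∑ j ∈ Finset.range i, n' j) + 1 = ∑ j ∈ Finset.range i, n j := by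
      intro i hi
      have hm : i₁ ∈ Finset.range i := Finset.mem_range.mpr hi
      rw [← Finset.add_sum_erase _ n hm, ← Finset.add_sum_erase _ n' hm]
      have he : ∑ j ∈ (Finset.range i).erase i₁, n' j
          = ∑ j ∈ (Finset.range i).erase i₁, n j :=
        Finset.sum_congr rfl fun j hj => by
          simp [hn'def, Finset.ne_of_mem_erase hj]
      rw [he]
      have hni : n' i₁ = n i₁ - 1 := by simp [hn'def]
      rw [hni]
      omega
    have hNm : (∑ j ∈ Finset.range r, n' j) = m := by
      have := hS' r hi0r
      omega
    set idx' : Fin m → ℕ := fun u => idx u.succ with hidx'def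
    set wt' : Fin m → ℕ := fun u => wt u.succ - (if idx u.succ = i₁ then 1 else 0) with hwt'def
    have hblock' : ∀ u : Fin m, idx' u < r ∧ wt' u < n' (idx' u) ∧
        (u : ℕ) = (∑ j ∈ Finset.range (idx' u), n' j) + wt' u := by
      intro u
      obtain ⟨h1, h2, h3⟩ := hblock u.succ
      rw [Fin.val_succ] at h3
      have hidx'u : idx' u = idx u.succ := rfl
      by_cases hc : idx u.succ = i₁
      · rw [hc] at h3 h2
        rw [hS0] at h3
        have hw1 : 1 ≤ wt u.succ := by omega
        have hS'i : (∑ j ∈ Finset.range i₁, n' j) = 0 := by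
          refine Finset.sum_eq_zero fun j hj => ?_
          rw [Finset.mem_range] at hj
          simp [hn'def, Nat.ne_of_lt hj, hz j hj]
        have hwt'u : wt' u = wt u.succ - 1 := by simp [hwt'def, hc]
        refine ⟨by rw [hidx'u, hc]; exact hi0r, ?_, ?_⟩
        · rw [hwt'u, hidx'u, hc]
          have hni : n' i₁ = n i₁ - 1 := by simp [hn'def]
          rw [hni]
          omega
        · rw [hwt'u, hidx'u, hc, hS'i]
          omega
      · have hgt : i₁ < idx u.succ := by
          rcases lt_trichotomy (idx u.succ) i₁ with h | h | h
          · exact absurd (hz _ h) (by omega)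
          · exact absurd h hc
          · exact h
        have hwt'u : wt' u = wt u.succ := by simp [hwt'def, hc]
        have hni : n' (idx u.succ) = n (idx u.succ) := by simp [hn'def, hc]
        refine ⟨by rw [hidx'u]; exact h1, by rw [hwt'u, hidx'u, hni]; exact h2, ?_⟩
        rw [hwt'u, hidx'u]
        have := hS' (idx u.succ) hgt
        omega
    have hS1 : ∀ i, i₁ < i → 1 ≤ ∑ j ∈ Finset.range i, n j := by
      intro i hi
      have h1 : (∑ j ∈ Finset.range (i₁+1), n j) ≤ ∑ j ∈ Finset.range i, n j :=
        Finset.sum_le_sum_of_subset (Finset.range_subset_range.mpr hi)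
      rw [Finset.sum_range_succ, hS0] at h1
      omega
    set W : Fin (m+1) → ℕ := fun u => wt u - (if idx u = i₁ then 1 else 0) with hW
    set B : Matrix (Fin (m+1)) (Fin (m+1)) R := Matrix.of fun u v =>
      if (u : ℕ) = 0 then (if (v : ℕ) = 0 then 1 else 0)
      else if (v : ℕ) = 0 then 0
      else (Nat.choose ((v : ℕ) - 1) (W u) : R) * t (idx u) ^ ((v : ℕ) - 1 - W u) with hB
    set d : Fin (m+1) → R := fun u => if idx u = i₁ then 1 else t (idx u) - t i₁ with hd
    set bb : Fin (m+1) → R := fun u => if idx u = i₁ then 0 else 1 with hbb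
    set p : Fin (m+1) → Fin (m+1) := fun u =>
      if wt u = 0 then 0 else ⟨(u : ℕ) - 1, Nat.lt_of_le_of_lt (Nat.sub_le _ _) u.isLt⟩ with hp
    set L : Matrix (Fin (m+1)) (Fin (m+1)) R := Matrix.of fun u c =>
      (if c = u then d u else 0) + (if c = p u then bb u else 0) with hL
    have hLB : ∀ u v, (L * B) u v = d u * B u v + bb u * B (p u) v := by
      intro u v
      rw [Matrix.mul_apply]
      have hterm : ∀ c, L u c * B c v
          = (if c = u then d u * B u v else 0) + (if c = p u then bb u * B (p u) v else 0) := by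
        intro c
        simp only [hL, Matrix.of_apply]
        by_cases h1 : c = u
        · subst h1
          by_cases h2 : c = p c
          · rw [if_pos rfl, if_pos h2, if_pos rfl, if_pos h2, ← h2]
            ring
          · rw [if_pos rfl, if_neg h2, if_pos rfl, if_neg h2]
            ring
        · by_cases h2 : c = p u
          · subst h2
            rw [if_neg h1, if_pos rfl, if_neg h1, if_pos rfl]
            ring
          · rw [if_neg h1, if_neg h2, if_neg h1, if_neg h2]
            ring
      rw [Finset.sum_congr rfl fun c _ => hterm c, Finset.sum_add_distrib,
        Finset.sum_ite_eq' Finset.univ u, Finset.sum_ite_eq' Finset.univ (p u)]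
      simp
    have hmain : ∀ u v : Fin (m+1),
        d u * B u v + bb u * B (p u) v
          = (Nat.choose (v : ℕ) (wt u) : R) * t (idx u) ^ ((v : ℕ) - wt u)
            - (if (v : ℕ) = 0 then 0
               else t i₁ * ((Nat.choose ((v : ℕ) - 1) (wt u) : R)
                 * t (idx u) ^ ((v : ℕ) - 1 - wt u))) := by
      intro u v
      obtain ⟨h1u, h2u, h3u⟩ := hblock u
      by_cases hu0 : (u : ℕ) = 0
      · have hu : u = 0 := Fin.ext hu0
        subst hu
        rcases Nat.eq_zero_or_pos (v : ℕ) with hv | hv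
        · simp [-Fin.val_eq_zero_iff, hB, hd, hbb, hwt0, ← hi₁def, hv]
        · obtain ⟨k, hk⟩ : ∃ k, (v : ℕ) = k + 1 := ⟨(v : ℕ) - 1, by omega⟩
          simp [-Fin.val_eq_zero_iff, hB, hd, hbb, hwt0, ← hi₁def, hk, pow_succ]
          ring
      · by_cases hci : idx u = i₁
        · have hw1 : 1 ≤ wt u := by
            rcases Nat.eq_zero_or_pos (wt u) with h | h
            · rw [hci, hS0, h] at h3u; omega
            · exact h
          have hd_u : d u = 1 := by simp [hd, hci]
          have hbb_u : bb u = 0 := by simp [hbb, hci]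
          have hW_u : W u = wt u - 1 := by simp [hW, hci]
          obtain ⟨w', hw'⟩ : ∃ w', wt u = w' + 1 := ⟨wt u - 1, by omega⟩
          rcases Nat.eq_zero_or_pos (v : ℕ) with hv | hv
          · simp [-Fin.val_eq_zero_iff, hB, hd_u, hbb_u, hu0, hv, hw', Nat.choose_eq_zero_of_lt (Nat.succ_pos w')]
          · obtain ⟨k, hk⟩ : ∃ k, (v : ℕ) = k + 1 := ⟨(v : ℕ) - 1, by omega⟩
            have hh := cv_pow_helper (t i₁) k (w' + 1)
            rw [Nat.succ_sub_succ] at hh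
            simp only [hB, Matrix.of_apply, hd_u, hbb_u, hW_u, hu0, hk, hw', hci,
              Nat.add_sub_cancel, Nat.succ_sub_succ, Nat.sub_zero,
              if_neg (Nat.succ_ne_zero k),
              Nat.choose_succ_succ, Nat.cast_add, one_mul, zero_mul, add_zero,
              if_false]
            linear_combination -hh
        · have hgt : i₁ < idx u := by
            rcases lt_trichotomy (idx u) i₁ with h | h | h
            · exact absurd (hz _ h) (by omega)
            · exact absurd h hci
            · exact h
          have hd_u : d u = t (idx u) - t i₁ := by simp [hd, hci]
          have hbb_u : bb u = 1 := by simp [hbb, hci]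
          have hW_u : W u = wt u := by simp [hW, hci]
          by_cases hw0 : wt u = 0
          · have hp_u : p u = 0 := by simp [hp, hw0]
            rcases Nat.eq_zero_or_pos (v : ℕ) with hv | hv
            · simp [-Fin.val_eq_zero_iff, hB, hd_u, hbb_u, hp_u, hu0, hv, hw0]
            · obtain ⟨k, hk⟩ : ∃ k, (v : ℕ) = k + 1 := ⟨(v : ℕ) - 1, by omega⟩
              simp [-Fin.val_eq_zero_iff, hB, hd_u, hbb_u, hp_u, hu0, hk, hw0, hW_u, pow_succ]
              ring
          · have hpval : ((p u : Fin (m+1)) : ℕ) = (u : ℕ) - 1 := by simp [hp, hw0]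
            have hu1 : 1 ≤ (u : ℕ) := by omega
            have hSge : 1 ≤ ∑ j ∈ Finset.range (idx u), n j := hS1 _ hgt
            have hpu : ((p u : Fin (m+1)) : ℕ)
                = (∑ j ∈ Finset.range (idx u), n j) + (wt u - 1) := by omega
            obtain ⟨hpi, hpw⟩ := cv_uniq r n idx wt hblock (p u) (idx u) (wt u - 1)
              (by omega) hpu
            have hp0 : ((p u : Fin (m+1)) : ℕ) ≠ 0 := by omega
            obtain ⟨w', hw'⟩ : ∃ w', wt u = w' + 1 := ⟨wt u - 1, by omega⟩
            have hWp : W (p u) = w' := by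
              simp [hW, hpi, hci, hpw, hw']
            rcases Nat.eq_zero_or_pos (v : ℕ) with hv | hv
            · simp [-Fin.val_eq_zero_iff, hB, hd_u, hbb_u, hu0, hp0, hv, hw',
                Nat.choose_eq_zero_of_lt (Nat.succ_pos w')]
            · obtain ⟨k, hk⟩ : ∃ k, (v : ℕ) = k + 1 := ⟨(v : ℕ) - 1, by omega⟩
              have hh := cv_pow_helper (t (idx u)) k (w' + 1)
              rw [Nat.succ_sub_succ] at hh
              simp only [hB, Matrix.of_apply, hd_u, hbb_u, hW_u, hWp, hpi, hu0, hp0, hk, hw',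
                Nat.add_sub_cancel, Nat.succ_sub_succ, Nat.sub_zero,
                if_neg (Nat.succ_ne_zero k),
                Nat.choose_succ_succ, Nat.cast_add, one_mul, if_false]
              linear_combination -hh
    have hdet1 : Matrix.det (fun u v : Fin (m+1) =>
        (Nat.choose (v : ℕ) (wt u) : R) * t (idx u) ^ ((v : ℕ) - wt u)) = (L * B).det := by
      apply Matrix.det_eq_of_forall_col_eq_smul_add_pred (fun _ => t i₁)
      · intro u
        rw [hLB, hmain]
        simp
      · intro u j
        rw [hLB, hmain]
        simp only [Fin.val_succ, Fin.coe_castSucc, Nat.add_sub_cancel,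
          if_neg (Nat.succ_ne_zero (j : ℕ))]
        ring
    rw [hdet1, Matrix.det_mul]
    have hdetL : L.det = ∏ i ∈ Finset.range r, (if i = i₁ then 1 else t i - t i₁) ^ n i := by
      have htri : L.BlockTriangular OrderDual.toDual := by
        intro u c h
        have hcu : (u : ℕ) < (c : ℕ) := h
        have h1 : ¬ (c = u) := by
          intro h'; rw [h'] at hcu; exact lt_irrefl _ hcu
        have h2 : ¬ (c = p u) := by
          intro h'
          have hle : ((p u : Fin (m+1)) : ℕ) ≤ (u : ℕ) := by
            by_cases hw0 : wt u = 0
            · simp [hp, hw0]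
            · simp only [hp, hw0, if_neg, if_false]
              exact Nat.sub_le _ _
          rw [h'] at hcu; omega
        simp [hL, h1, h2]
      rw [Matrix.det_of_lowerTriangular L htri]
      have hdiag : ∀ u : Fin (m+1), L u u = d u := by
        intro u
        have hq : ¬ (u = p u) ∨ bb u = 0 := by
          by_cases hw0 : wt u = 0
          · by_cases hu0 : (u : ℕ) = 0
            · right
              have hu : u = 0 := Fin.ext hu0
              rw [hu, hbb]
              simp [← hi₁def]
            · left
              intro h'
              have : p u = 0 := by simp [hp, hw0]
              rw [this] at h'
              exact hu0 (by rw [h'] ; rfl)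
          · left
            intro h'
            obtain ⟨-, -, h3⟩ := hblock u
            have hval : (u : ℕ) = ((p u : Fin (m+1)) : ℕ) := congrArg Fin.val h'
            have : ((p u : Fin (m+1)) : ℕ) = (u : ℕ) - 1 := by simp [hp, hw0]
            omega
        rcases hq with hq | hq
        · simp [hL, hq]
        · simp [hL, hq]
      rw [Finset.prod_congr rfl fun u _ => hdiag u]
      have hcv := cv_prod r n hN idx wt hblock (fun i _ => if i = i₁ then 1 else t i - t i₁)
      simp only [hd]
      rw [hcv]
      refine Finset.prod_congr rfl fun i _ => ?_
      rw [Finset.prod_const, Finset.card_range]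
    have hdetB : B.det = Matrix.det (fun u v : Fin m =>
        (Nat.choose (v : ℕ) (wt' u) : R) * t (idx' u) ^ ((v : ℕ) - wt' u)) := by
      rw [Matrix.det_succ_row_zero]
      rw [Finset.sum_eq_single 0]
      · have hB00 : B 0 0 = 1 := by simp [-Fin.val_eq_zero_iff, hB]
        rw [hB00]
        simp only [Fin.val_zero, pow_zero, one_mul, mul_one]
        rw [Fin.succAbove_zero]
        refine congrArg Matrix.det (funext fun u => funext fun v => ?_)
        have hus : ((u.succ : Fin (m+1)) : ℕ) = (u : ℕ) + 1 := Fin.val_succ u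
        have hvs : ((v.succ : Fin (m+1)) : ℕ) = (v : ℕ) + 1 := Fin.val_succ v
        simp only [Matrix.submatrix_apply, hB, Matrix.of_apply, hus, hvs,
          Nat.succ_ne_zero, if_false, Nat.add_sub_cancel]
        rfl
      · intro j hj hne
        have : (j : ℕ) ≠ 0 := fun h => hne (Fin.ext h)
        simp [-Fin.val_eq_zero_iff, hB, this]
      · intro h; exact absurd (Finset.mem_univ _) h
    rw [hdetL, hdetB, ih n' idx' wt' hNm hblock']
    rw [← Finset.prod_mul_distrib]
    refine Finset.prod_congr rfl fun i hi => ?_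
    by_cases hgt : i₁ < i
    · have hne : i ≠ i₁ := by omega
      rw [if_neg hne]
      have hmem : i₁ ∈ Finset.range i := Finset.mem_range.mpr hgt
      rw [← Finset.mul_prod_erase _ (fun j => (t i - t j) ^ (n' i * n' j)) hmem,
        ← Finset.mul_prod_erase _ (fun j => (t i - t j) ^ (n i * n j)) hmem]
      have heq : ∏ j ∈ (Finset.range i).erase i₁, (t i - t j) ^ (n' i * n' j)
          = ∏ j ∈ (Finset.range i).erase i₁, (t i - t j) ^ (n i * n j) := by
        refine Finset.prod_congr rfl fun j hj => ?_
        have hj1 : j ≠ i₁ := Finset.ne_of_mem_erase hj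
        simp [hn'def, hj1, hne]
      rw [heq, ← mul_assoc, ← pow_add]
      have hni : n' i = n i := by simp [hn'def, hne]
      have hni₁ : n' i₁ = n i₁ - 1 := by simp [hn'def]
      congr 2
      rw [hni, hni₁]
      obtain ⟨k, hk⟩ : ∃ k, n i₁ = k + 1 := ⟨n i₁ - 1, by omega⟩
      rw [hk, Nat.add_sub_cancel]
      ring
    · have hz' : ∀ j ∈ Finset.range i, n' j = 0 ∧ n j = 0 := by
        intro j hj
        rw [Finset.mem_range] at hj
        have hji : j < i₁ := by omega
        exact ⟨by simp [hn'def, Nat.ne_of_lt hji, hz j hji], hz j hji⟩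
      rw [Finset.prod_eq_one (fun j hj => by rw [(hz' j hj).1, mul_zero, pow_zero]),
        Finset.prod_eq_one (fun j hj => by rw [(hz' j hj).2, mul_zero, pow_zero])]
      rcases eq_or_lt_of_le (not_lt.mp hgt) with h | h
      · rw [if_pos h]
        simp
      · rw [hz i h]
        simp




/-- Confluent Vandermonde determinant (Claim 5.2(2)): the `N×N` matrix with rows
indexed by pairs `(i,w)` (`1 ≤ i ≤ r`, `0 ≤ w < n_i`, enumerated in lexicographic
order via `idx`, `wt`) and columns `v = 1,…,N`, with entries
`C(v-1,w)·t_i^{v-1-w}`, has determinant `Π_{i>j}(t_i - t_j)^{n_i n_j}`. -/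
theorem confluent_vandermonde_det {R : Type*} [CommRing R]
    (r : ℕ) (t : ℕ → R) (n : ℕ → ℕ)
    (idx wt : Fin (∑ j ∈ Finset.range r, n j) → ℕ)
    (hblock : ∀ u, idx u < r ∧ wt u < n (idx u) ∧
      (u : ℕ) = (∑ j ∈ Finset.range (idx u), n j) + wt u) :
    Matrix.det (fun u v : Fin (∑ j ∈ Finset.range r, n j) =>
        (Nat.choose (v : ℕ) (wt u) : R) * t (idx u) ^ ((v : ℕ) - wt u)) =
      ∏ i ∈ Finset.range r, ∏ j ∈ Finset.range i, (t i - t j) ^ (n i * n j) := by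
  exact cv_aux r t _ n idx wt rfl hblock
end

section
/- Let R be a commutative ring and t_1, …, t_r ∈ R. For natural numbers n_1, …, n_r with N = Σ n_j and m ≥ N, consider the N×m matrix A(n_1,…,n_r; m) with rows indexed by pairs (i,w), 1 ≤ i ≤ r, 0 ≤ w < n_i, and columns v = 1,…,m, and entries C(v-1,w)·t_i^{v-1-w}. Then every N×N minor of A(n_1,…,n_r;m) is divisible by Π_{i>j}(t_i - t_j)^{n_i n_j}. -/
open Finset

/-- Sum of distinct naturals in a finset is at least `0 + 1 + ⋯ + (card - 1)`. -/
lemma CVM.sum_range_card_le (S : Finset ℕ) : ∑ i ∈ range S.card, i ≤ ∑ x ∈ S, x := by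
  induction S using Finset.strongInduction with
  | _ S ih =>
    rcases S.eq_empty_or_nonempty with rfl | hS
    · simp
    · have hM : S.max' hS ∈ S := S.max'_mem hS
      have hsub : S.erase (S.max' hS) ⊂ S := Finset.erase_ssubset hM
      have h1 := ih _ hsub
      have hcard : (S.erase (S.max' hS)).card = S.card - 1 := Finset.card_erase_of_mem hM
      have hMax : S.card - 1 ≤ S.max' hS := by
        have hsub2 : S ⊆ Finset.range (S.max' hS + 1) := fun x hx =>
          Finset.mem_range.mpr (Nat.lt_succ_of_le (S.le_max' x hx))
        have := Finset.card_le_card hsub2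
        simp only [Finset.card_range] at this
        omega
      have hsum : S.max' hS + ∑ x ∈ S.erase (S.max' hS), x = ∑ x ∈ S, x :=
        Finset.add_sum_erase S id hM
      have hcpos : 1 ≤ S.card := Finset.Nonempty.card_pos hS
      have : ∑ i ∈ range S.card, i = ∑ i ∈ range (S.card - 1), i + (S.card - 1) := by
        conv_lhs => rw [show S.card = (S.card - 1) + 1 by omega]
        rw [Finset.sum_range_succ]
      rw [hcard] at h1
      omega

/-- Uniqueness of the block decomposition. -/
lemma CVM.block_eq {n : ℕ → ℕ} {j j' s s' : ℕ} (hs : s < n j) (hs' : s' < n j')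
    (h : ∑ l ∈ range j, n l + s = ∑ l ∈ range j', n l + s') : j = j' ∧ s = s' := by
  have aux : ∀ {b b' c c' : ℕ}, b < b' → ∑ l ∈ range b, n l + c = ∑ l ∈ range b', n l + c' →
      c < n b → False := by
    intro b b' c c' hbb heq hc
    have h1 : ∑ l ∈ range (b + 1), n l ≤ ∑ l ∈ range b', n l :=
      Finset.sum_le_sum_of_subset (Finset.range_subset_range.mpr hbb)
    rw [Finset.sum_range_succ] at h1
    omega
  rcases lt_trichotomy j j' with h1 | h1 | h1
  · exact absurd (aux h1 h hs) (by simp)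
  · subst h1; omega
  · exact absurd (aux h1 h.symm hs') (by simp)

/-- The binomial identity `C(n,w)·C(n-w,k) = C(w+k,w)·C(n,w+k)`. -/
lemma CVM.choose_identity (n w k : ℕ) :
    n.choose w * (n - w).choose k = (w + k).choose w * n.choose (w + k) := by
  rcases le_or_gt (w + k) n with h | h
  · have := Nat.choose_mul (n := n) (k := w + k) (s := w) (Nat.le_add_right w k)
    rw [Nat.add_sub_cancel_left] at this
    rw [← this]; ring
  · have hz : n.choose (w + k) = 0 := Nat.choose_eq_zero_of_lt h
    rw [hz, mul_zero]
    rcases le_or_gt w n with h2 | h2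
    · rw [Nat.choose_eq_zero_of_lt (by omega : n - w < k), mul_zero]
    · rw [Nat.choose_eq_zero_of_lt h2, zero_mul]

open Finset

/-- A determinant vanishes if two rows are scalar multiples of a common vector. -/
lemma CVM.det_eq_zero_of_smul_rows {S : Type*} [CommRing S] {ι : Type*} [DecidableEq ι]
    [Fintype ι] (d : Matrix ι ι S) {u1 u2 : ι} (h : u1 ≠ u2) (α β : S) (v : ι → S)
    (h1 : d u1 = α • v) (h2 : d u2 = β • v) : d.det = 0 := by
  have e1 : d.det = (d.updateRow u1 (α • v)).det := by rw [← h1, Matrix.updateRow_eq_self]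
  rw [e1, Matrix.det_updateRow_smul]
  have hu2 : (d.updateRow u1 v) u2 = β • v := by
    rw [Matrix.updateRow_ne (Ne.symm h)]; exact h2
  have e2 : (d.updateRow u1 v).det = ((d.updateRow u1 v).updateRow u2 (β • v)).det := by
    rw [← hu2, Matrix.updateRow_eq_self]
  rw [e2, Matrix.det_updateRow_smul]
  have e3 : ((d.updateRow u1 v).updateRow u2 v).det = 0 := by
    apply Matrix.det_zero_of_row_eq h
    rw [Matrix.updateRow_ne h, Matrix.updateRow_self, Matrix.updateRow_self]
  rw [e3, mul_zero, mul_zero]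

/-- If each entry of a polynomial matrix has coefficient rows `Crow u k`, and each
determinant of coefficient-row choices of total degree `< M` vanishes, then `X^M`
divides the determinant. -/
lemma CVM.X_pow_dvd_det {S : Type*} [CommRing S] {ι : Type*} [DecidableEq ι] [Fintype ι]
    (B : Matrix ι ι (Polynomial S)) (K M : ℕ) (Crow : ι → ℕ → ι → S)
    (hB : ∀ u, B u = fun v => ∑ k ∈ range K, Polynomial.X ^ k * Polynomial.C (Crow u k v))
    (hzero : ∀ μ : ι → ℕ, (∑ u, μ u) < M →
      Matrix.det (Matrix.of fun u v => Crow u (μ u) v) = 0) :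
    (Polynomial.X : Polynomial S) ^ M ∣ B.det := by
  classical
  set f := (Matrix.detRowAlternating (R := Polynomial S) (n := ι)).toMultilinearMap with hf
  have hdet : B.det = f B := rfl
  have hrow : B = fun u => ∑ k ∈ range K,
      (Polynomial.X ^ k : Polynomial S) • (fun v => Polynomial.C (Crow u k v)) := by
    funext u; rw [hB u]; funext v
    simp [Finset.sum_apply, smul_eq_mul]
  have hexp : f B = ∑ μ ∈ Fintype.piFinset (fun _ : ι => range K),
      f (fun u => (Polynomial.X ^ (μ u) : Polynomial S) •
          (fun v => Polynomial.C (Crow u (μ u) v))) := by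
    rw [hrow]
    exact f.map_sum_finset
      (g := fun u k => (Polynomial.X ^ k : Polynomial S) • (fun v => Polynomial.C (Crow u k v)))
      (A := fun _ => range K)
  rw [hdet, hexp]
  apply Finset.dvd_sum
  intro μ _
  have hsmul : f (fun u => (Polynomial.X ^ (μ u) : Polynomial S) •
        (fun v => Polynomial.C (Crow u (μ u) v))) =
      (∏ u, (Polynomial.X ^ (μ u) : Polynomial S)) •
        f (fun u v => Polynomial.C (Crow u (μ u) v)) :=
    f.map_smul_univ _ _
  rw [hsmul]
  have hprod : (∏ u, (Polynomial.X ^ (μ u) : Polynomial S)) =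
      Polynomial.X ^ (∑ u, μ u) := Finset.prod_pow_eq_pow_sum _ _ _
  have hCdet : f (fun u v => Polynomial.C (Crow u (μ u) v)) =
      Polynomial.C (Matrix.det (Matrix.of fun u v => Crow u (μ u) v)) := by
    exact (RingHom.map_det (Polynomial.C : S →+* Polynomial S)
      (Matrix.of fun u v => Crow u (μ u) v)).symm
  rw [hprod, hCdet, smul_eq_mul]
  rcases lt_or_ge (∑ u, μ u) M with hlt | hle
  · rw [hzero μ hlt]; simp
  · exact Dvd.dvd.mul_right (pow_dvd_pow _ hle) _

open Finset

/-- Combining prime power divisibilities in a domain. -/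
lemma CVM.prod_pow_dvd {κ : Type*} [DecidableEq κ] {S : Type*} [CommRing S] [IsDomain S]
    (s : Finset κ) (p : κ → S) (e : κ → ℕ) (z : S)
    (hp : ∀ a ∈ s, Prime (p a))
    (hnd : ∀ a ∈ s, ∀ b ∈ s, a ≠ b → ¬ p a ∣ p b)
    (hd : ∀ a ∈ s, p a ^ e a ∣ z) : (∏ a ∈ s, p a ^ e a) ∣ z := by
  classical
  induction s using Finset.induction with
  | empty => simpa using one_dvd z
  | @insert a s ha ih =>
    rw [Finset.prod_insert ha]
    have hQ : (∏ b ∈ s, p b ^ e b) ∣ z :=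
      ih (fun b hb => hp b (Finset.mem_insert_of_mem hb))
        (fun b hb c hc hbc => hnd b (Finset.mem_insert_of_mem hb) c
          (Finset.mem_insert_of_mem hc) hbc)
        (fun b hb => hd b (Finset.mem_insert_of_mem hb))
    obtain ⟨cz, hcz⟩ := hQ
    have hpa : Prime (p a) := hp a (Finset.mem_insert_self a s)
    have hnotdvd : ¬ p a ∣ ∏ b ∈ s, p b ^ e b := by
      intro hdvd
      obtain ⟨b, hb, hdvd'⟩ := (hpa.dvd_finset_prod_iff _).mp hdvd
      have hab : a ≠ b := fun h => ha (h ▸ hb)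
      exact hnd a (Finset.mem_insert_self a s) b (Finset.mem_insert_of_mem hb) hab
        (hpa.dvd_of_dvd_pow hdvd')
    have h1 : p a ^ e a ∣ (∏ b ∈ s, p b ^ e b) * cz := hcz ▸ hd a (Finset.mem_insert_self a s)
    have h2 : p a ^ e a ∣ cz := hpa.pow_dvd_of_dvd_mul_left _ hnotdvd h1
    rw [hcz]
    calc p a ^ e a * ∏ x ∈ s, p x ^ e x
        = (∏ x ∈ s, p x ^ e x) * p a ^ e a := mul_comm _ _
      _ ∣ (∏ b ∈ s, p b ^ e b) * cz := mul_dvd_mul_left _ h2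

/-- `X i - X j` is prime in `MvPolynomial ℕ ℤ` for `i ≠ j`. -/
lemma CVM.prime_X_sub_X {i j : ℕ} (h : j ≠ i) :
    Prime (MvPolynomial.X i - MvPolynomial.X j : MvPolynomial ℕ ℤ) := by
  classical
  let E := (MvPolynomial.renameEquiv ℤ (Equiv.optionSubtypeNe i).symm).trans
    (MvPolynomial.optionEquivLeft ℤ {b : ℕ // b ≠ i})
  rw [← MulEquiv.prime_iff (E.toRingEquiv.toMulEquiv)]
  have h1 : E (MvPolynomial.X i) = Polynomial.X := by
    simp [E, MvPolynomial.renameEquiv_apply, MvPolynomial.rename_X,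
      Equiv.optionSubtypeNe_symm_self, MvPolynomial.optionEquivLeft_X_none]
  have h2 : E (MvPolynomial.X j) =
      Polynomial.C (MvPolynomial.X (⟨j, h⟩ : {b : ℕ // b ≠ i})) := by
    simp [E, MvPolynomial.renameEquiv_apply, MvPolynomial.rename_X,
      Equiv.optionSubtypeNe_symm_of_ne h, MvPolynomial.optionEquivLeft_X_some]
  show Prime (E (MvPolynomial.X i - MvPolynomial.X j))
  rw [map_sub, h1, h2]
  exact Polynomial.prime_X_sub_C _

/-- Distinct ordered pairs give non-associated linear forms. -/
lemma CVM.not_dvd_pair {i j i' j' : ℕ} (hji : j < i) (hj'i' : j' < i')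
    (hne : ¬(i = i' ∧ j = j')) :
    ¬ ((MvPolynomial.X i - MvPolynomial.X j : MvPolynomial ℕ ℤ) ∣
        (MvPolynomial.X i' - MvPolynomial.X j')) := by
  rintro ⟨q, hq⟩
  let ρ := MvPolynomial.aeval (R := ℤ)
    (fun k => if k = i then (MvPolynomial.X j : MvPolynomial ℕ ℤ) else MvPolynomial.X k)
  have h0 : ρ (MvPolynomial.X i - MvPolynomial.X j) = 0 := by
    simp [ρ, MvPolynomial.aeval_X, if_neg (by omega : ¬ j = i)]
  have hz : ρ (MvPolynomial.X i' - MvPolynomial.X j') = 0 := by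
    rw [hq, map_mul, h0, zero_mul]
  rw [map_sub, MvPolynomial.aeval_X, MvPolynomial.aeval_X, sub_eq_zero] at hz
  rw [← apply_ite (MvPolynomial.X (R := ℤ)) (i' = i) j i',
    ← apply_ite (MvPolynomial.X (R := ℤ)) (j' = i) j j'] at hz
  have hz' := MvPolynomial.X_injective (R := ℤ) hz
  split_ifs at hz' <;> omega
/-- Claim 5.2(1): every `N×N` minor of the `N×m` matrix `A(n_1,…,n_r;m)` (rows indexed by
pairs `(i,w)`, `1 ≤ i ≤ r`, `0 ≤ w < n_i`, in lexicographic order via `idx`, `wt`;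
columns `v = 1,…,m`; entries `C(v-1,w)·t_i^{v-1-w}`) is divisible by
`Π_{i>j}(t_i - t_j)^{n_i n_j}`. A minor is given by an injective choice `c` of
`N` of the `m` columns. -/
theorem confluent_vandermonde_minors_dvd {R : Type*} [CommRing R]
    (r m : ℕ) (t : ℕ → R) (n : ℕ → ℕ)
    (hm : (∑ j ∈ Finset.range r, n j) ≤ m)
    (idx wt : Fin (∑ j ∈ Finset.range r, n j) → ℕ)
    (hblock : ∀ u, idx u < r ∧ wt u < n (idx u) ∧
      (u : ℕ) = (∑ j ∈ Finset.range (idx u), n j) + wt u)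
    (c : Fin (∑ j ∈ Finset.range r, n j) → Fin m) (hc : Function.Injective c) :
    (∏ i ∈ Finset.range r, ∏ j ∈ Finset.range i, (t i - t j) ^ (n i * n j)) ∣
      Matrix.det (fun u v : Fin (∑ j ∈ Finset.range r, n j) =>
        (Nat.choose ((c v : ℕ)) (wt u) : R) * t (idx u) ^ (((c v : ℕ)) - wt u)) := by
  classical
  set D : MvPolynomial ℕ ℤ := Matrix.det (fun u v : Fin (∑ l ∈ Finset.range r, n l) =>
    ((Nat.choose ((c v : ℕ)) (wt u) : ℕ) : MvPolynomial ℕ ℤ) *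
      (MvPolynomial.X (idx u)) ^ (((c v : ℕ)) - wt u)) with hD
  -- block index construction
  have hmk : ∀ p w, p < r → w < n p → ∃ u : Fin (∑ l ∈ Finset.range r, n l), idx u = p ∧ wt u = w := by
    intro p w hp hw
    have hlt : ∑ l ∈ Finset.range p, n l + w < ∑ j ∈ Finset.range r, n j := by
      have h1 : ∑ l ∈ Finset.range (p + 1), n l ≤ ∑ j ∈ Finset.range r, n j :=
        Finset.sum_le_sum_of_subset (Finset.range_subset_range.mpr hp)
      rw [Finset.sum_range_succ] at h1; omega
    refine ⟨⟨_, hlt⟩, ?_⟩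
    obtain ⟨h1, h2, h3⟩ := hblock ⟨_, hlt⟩
    have heq : ∑ l ∈ Finset.range (idx ⟨_, hlt⟩), n l + wt ⟨_, hlt⟩ =
        ∑ l ∈ Finset.range p, n l + w := by rw [← h3]
    obtain ⟨ha, hb⟩ := CVM.block_eq h2 hw heq
    exact ⟨ha, hb⟩
  have hinj : ∀ u u' : Fin (∑ l ∈ Finset.range r, n l), idx u = idx u' → wt u = wt u' → u = u' := by
    intro u u' h1 h2
    obtain ⟨_, _, h3⟩ := hblock u; obtain ⟨_, _, h3'⟩ := hblock u'
    apply Fin.ext; rw [h3, h3', h1, h2]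
  -- the key pairwise divisibility in the universal ring
  have key : ∀ i j : ℕ, j < i → i < r →
      (MvPolynomial.X i - MvPolynomial.X j : MvPolynomial ℕ ℤ) ^ (n i * n j) ∣ D := by
    intro i j hji hir
    set Bi : Finset (Fin (∑ l ∈ Finset.range r, n l)) := Finset.univ.filter (fun u : Fin (∑ l ∈ Finset.range r, n l) => idx u = i) with hBidef
    have hBi : ∀ g : ℕ → ℕ, ∑ u ∈ Bi, g (wt u) = ∑ w ∈ Finset.range (n i), g w := by
      intro g
      refine Finset.sum_bij' (i := fun u (_ : u ∈ Bi) => wt u)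
        (j := fun w hw => (hmk i w hir (Finset.mem_range.mp hw)).choose)
        ?_ ?_ ?_ ?_ ?_
      · intro u hu
        rw [Finset.mem_range]
        have := (hblock u).2.1
        rwa [(Finset.mem_filter.mp hu).2] at this
      · intro w hw
        obtain ⟨h1, _⟩ := (hmk i w hir (Finset.mem_range.mp hw)).choose_spec
        exact Finset.mem_filter.mpr ⟨Finset.mem_univ _, h1⟩
      · intro u hu
        have hui : idx u = i := (Finset.mem_filter.mp hu).2
        have hs := (hmk i (wt u) hir
          (by have := (hblock u).2.1; rwa [hui] at this)).choose_spec
        exact hinj _ u (hs.1.trans hui.symm) hs.2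
      · intro w hw
        exact ((hmk i w hir (Finset.mem_range.mp hw)).choose_spec).2
      · intro u hu; rfl
    have hcard : Bi.card = n i := by
      have h := hBi (fun _ => 1)
      simpa using h
    have hwtsum : ∑ u ∈ Bi, wt u = ∑ w ∈ Finset.range (n i), w := hBi id
    -- ring homs
    set φ : MvPolynomial ℕ ℤ →+* Polynomial (MvPolynomial ℕ ℤ) :=
      (MvPolynomial.aeval (R := ℤ) (fun k => if k = i then
        (Polynomial.X + Polynomial.C (MvPolynomial.X j))
        else Polynomial.C (MvPolynomial.X k))).toRingHom with hφ
    set ψ : Polynomial (MvPolynomial ℕ ℤ) →+* MvPolynomial ℕ ℤ :=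
      Polynomial.evalRingHom (MvPolynomial.X i - MvPolynomial.X j) with hψ
    have hψφ : ∀ z : MvPolynomial ℕ ℤ, ψ (φ z) = z := by
      have hcomp : ψ.comp φ = RingHom.id (MvPolynomial ℕ ℤ) := by
        apply MvPolynomial.ringHom_ext
        · intro z
          simp [hφ, hψ, MvPolynomial.aeval_C, MvPolynomial.algebraMap_eq]
        · intro k
          by_cases hk : k = i
          · subst hk; simp [hφ, hψ]
          · simp [hφ, hψ, hk]
      intro z
      exact DFunLike.congr_fun hcomp z
    set B : Matrix (Fin (∑ l ∈ Finset.range r, n l)) (Fin (∑ l ∈ Finset.range r, n l)) (Polynomial (MvPolynomial ℕ ℤ)) := Matrix.of fun u v : Fin (∑ l ∈ Finset.range r, n l) =>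
      ((Nat.choose ((c v : ℕ)) (wt u) : ℕ) : Polynomial (MvPolynomial ℕ ℤ)) *
        (if idx u = i then Polynomial.X + Polynomial.C (MvPolynomial.X j)
         else Polynomial.C (MvPolynomial.X (idx u))) ^ (((c v : ℕ)) - wt u) with hBdef
    have hφD : φ D = B.det := by
      rw [hD]; refine (RingHom.map_det φ _).trans ?_
      congr 1
      funext u v
      change φ (((Nat.choose ((c v : ℕ)) (wt u) : ℕ) : MvPolynomial ℕ ℤ) * (MvPolynomial.X (idx u)) ^ (((c v : ℕ)) - wt u)) = _
      simp only [RingHom.mapMatrix_apply, Matrix.map_apply, hBdef, Matrix.of_apply]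
      rw [map_mul, map_pow, map_natCast]
      have hX : φ (MvPolynomial.X (idx u)) = (if idx u = i then
          Polynomial.X + Polynomial.C (MvPolynomial.X j)
          else Polynomial.C (MvPolynomial.X (idx u))) := by
        rw [hφ]
        simp only [AlgHom.toRingHom_eq_coe, RingHom.coe_coe, MvPolynomial.aeval_X]
      rw [hX]
    set Crow : Fin (∑ l ∈ Finset.range r, n l) → ℕ → Fin (∑ l ∈ Finset.range r, n l) → MvPolynomial ℕ ℤ := fun u k v =>
      if idx u = i then
        ((Nat.choose ((c v : ℕ)) (wt u) * Nat.choose (((c v : ℕ)) - wt u) k : ℕ) : MvPolynomial ℕ ℤ) *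
          (MvPolynomial.X j) ^ (((c v : ℕ)) - wt u - k)
      else if k = 0 then
        ((Nat.choose ((c v : ℕ)) (wt u) : ℕ) : MvPolynomial ℕ ℤ) *
          (MvPolynomial.X (idx u)) ^ (((c v : ℕ)) - wt u)
      else 0 with hCrow
    have hB : ∀ u, B u = fun v => ∑ k ∈ range (m + 1),
        Polynomial.X ^ k * Polynomial.C (Crow u k v) := by
      intro u; funext v
      by_cases hu : idx u = i
      · simp only [hBdef, Matrix.of_apply, if_pos hu, hCrow]
        set d := ((c v : ℕ)) - wt u with hd
        have hdm : d + 1 ≤ m + 1 := by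
          have : (c v : ℕ) < m := (c v).isLt
          omega
        rw [add_pow, Finset.mul_sum]
        refine Eq.trans (Finset.sum_subset (Finset.range_subset_range.mpr hdm) ?_) ?_
        · intro k _ hk
          rw [Finset.mem_range, not_lt] at hk
          rw [Nat.choose_eq_zero_of_lt (by omega : d < k)]
          push_cast
          ring
        · apply Finset.sum_congr rfl
          intro k _
          rw [map_mul, map_natCast, map_pow]
          push_cast
          ring
      · simp only [hBdef, Matrix.of_apply, if_neg hu, hCrow]
        rw [Finset.sum_eq_single 0]
        · simp only [if_neg hu, if_pos rfl, if_true, pow_zero, one_mul]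
          rw [map_mul, map_pow, map_natCast]
        · intro k _ hk
          simp only [if_neg hu, if_neg hk, map_zero, mul_zero]
        · intro h
          exact absurd (Finset.mem_range.mpr (Nat.succ_pos m)) h
    have hzero : ∀ μ : Fin (∑ l ∈ Finset.range r, n l) → ℕ, (∑ u, μ u) < n i * n j →
        Matrix.det (Matrix.of fun u v => Crow u (μ u) v) = 0 := by
      intro μ hμ
      by_cases hA : ∀ u : Fin (∑ l ∈ Finset.range r, n l), idx u ≠ i → μ u = 0
      · set g : ℕ → Fin (∑ l ∈ Finset.range r, n l) → MvPolynomial ℕ ℤ := fun s0 v =>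
          ((Nat.choose ((c v : ℕ)) s0 : ℕ) : MvPolynomial ℕ ℤ) *
            (MvPolynomial.X j) ^ (((c v : ℕ)) - s0) with hg
        have hrowi : ∀ u : Fin (∑ l ∈ Finset.range r, n l), idx u = i →
            (Matrix.of fun u v => Crow u (μ u) v) u =
              ((Nat.choose (wt u + μ u) (wt u) : ℕ) : MvPolynomial ℕ ℤ) • g (wt u + μ u) := by
          intro u hu; funext v
          simp only [Matrix.of_apply, hCrow, if_pos hu, Pi.smul_apply, smul_eq_mul, hg]
          rw [Nat.sub_sub, CVM.choose_identity]
          push_cast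
          ring
        by_cases hBcase : ∃ u1 u2 : Fin (∑ l ∈ Finset.range r, n l), u1 ≠ u2 ∧ idx u1 = i ∧ idx u2 = i ∧
            wt u1 + μ u1 = wt u2 + μ u2
        · obtain ⟨u1, u2, hne, h1, h2, heq⟩ := hBcase
          exact CVM.det_eq_zero_of_smul_rows _ hne _ _ (g (wt u1 + μ u1))
            (hrowi u1 h1) (by rw [heq]; exact hrowi u2 h2)
        · by_cases hCcase : ∃ u1 : Fin (∑ l ∈ Finset.range r, n l), idx u1 = i ∧ wt u1 + μ u1 < n j
          · obtain ⟨u1, h1, hlt⟩ := hCcase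
            obtain ⟨u2, hu2i, hu2w⟩ := hmk j (wt u1 + μ u1) (lt_trans hji hir) hlt
            have hne : u1 ≠ u2 := by
              intro h; rw [h, hu2i] at h1; omega
            have hrow2 : (Matrix.of fun u v => Crow u (μ u) v) u2 =
                (1 : MvPolynomial ℕ ℤ) • g (wt u1 + μ u1) := by
              funext v
              have hμ2 : μ u2 = 0 := hA u2 (by rw [hu2i]; omega)
              simp only [Matrix.of_apply, hCrow, hμ2, hu2i, hu2w, Pi.smul_apply, one_smul, hg]
              simp
            exact CVM.det_eq_zero_of_smul_rows _ hne _ 1 (g (wt u1 + μ u1))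
              (hrowi u1 h1) hrow2
          · exfalso
            push_neg at hBcase hCcase
            have hge : ∀ u ∈ Bi, n j ≤ wt u + μ u := fun u hu =>
              hCcase u (Finset.mem_filter.mp hu).2
            have hsinj : ∀ u ∈ Bi, ∀ u' ∈ Bi,
                wt u + μ u - n j = wt u' + μ u' - n j → u = u' := by
              intro u hu u' hu' h
              by_contra hne
              exact hBcase u u' hne (Finset.mem_filter.mp hu).2 (Finset.mem_filter.mp hu').2
                (by have := hge u hu; have := hge u' hu'; omega)
            have hSimgcard : (Bi.image (fun u => wt u + μ u - n j)).card = n i := by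
              rw [Finset.card_image_of_injOn hsinj, hcard]
            have hSimgsum : ∑ x ∈ Bi.image (fun u => wt u + μ u - n j), x =
                ∑ u ∈ Bi, (wt u + μ u - n j) := Finset.sum_image hsinj
            have hL0 := CVM.sum_range_card_le (Bi.image (fun u => wt u + μ u - n j))
            rw [hSimgcard, hSimgsum] at hL0
            have hsub : ∑ u ∈ Bi, (wt u + μ u - n j) + Bi.card * n j =
                ∑ u ∈ Bi, (wt u + μ u) := by
              calc ∑ u ∈ Bi, (wt u + μ u - n j) + Bi.card * n j
                  = ∑ u ∈ Bi, ((wt u + μ u - n j) + n j) := by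
                    rw [Finset.sum_add_distrib, Finset.sum_const, smul_eq_mul]
                _ = ∑ u ∈ Bi, (wt u + μ u) :=
                    Finset.sum_congr rfl (fun u hu => Nat.sub_add_cancel (hge u hu))
            have hssum : ∑ u ∈ Bi, (wt u + μ u) =
                (∑ w ∈ Finset.range (n i), w) + ∑ u ∈ Bi, μ u := by
              rw [Finset.sum_add_distrib, hwtsum]
            have hμBi : ∑ u ∈ Bi, μ u ≤ ∑ u, μ u :=
              Finset.sum_le_sum_of_subset (Finset.subset_univ _)
            rw [hcard] at hsub
            have hμ' : ∑ u, μ u < n i * n j := hμ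
            linarith
      · push_neg at hA
        obtain ⟨u, hui, hμu⟩ := hA
        apply Matrix.det_eq_zero_of_row_eq_zero u
        intro v
        simp only [Matrix.of_apply, hCrow, if_neg hui, if_neg hμu]
    have hXdvd := CVM.X_pow_dvd_det B (m + 1) (n i * n j) Crow hB hzero
    have hmap := map_dvd ψ hXdvd
    rw [map_pow] at hmap
    have hψX : ψ (Polynomial.X) = MvPolynomial.X i - MvPolynomial.X j := by
      simp [hψ]
    have hψB : ψ B.det = D := by
      rw [← hφD, hψφ]
    rw [hψX, hψB] at hmap
    exact hmap
  -- combine the pairwise divisibilities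
  have hcomb : (∏ q ∈ (Finset.range r).sigma (fun i => Finset.range i),
      (MvPolynomial.X q.1 - MvPolynomial.X q.2 : MvPolynomial ℕ ℤ) ^ (n q.1 * n q.2)) ∣ D := by
    apply CVM.prod_pow_dvd
    · intro q hq
      rw [Finset.mem_sigma, Finset.mem_range, Finset.mem_range] at hq
      exact CVM.prime_X_sub_X (by omega)
    · intro q hq q' hq' hne
      rw [Finset.mem_sigma, Finset.mem_range, Finset.mem_range] at hq hq'
      exact CVM.not_dvd_pair hq.2 hq'.2 (by
        rintro ⟨h1, h2⟩
        apply hne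
        cases q; cases q'
        simp_all)
    · intro q hq
      rw [Finset.mem_sigma, Finset.mem_range, Finset.mem_range] at hq
      exact key q.1 q.2 hq.2 hq.1
  rw [Finset.prod_sigma] at hcomb
  -- specialize via `aeval t`
  have hmap := map_dvd (MvPolynomial.aeval (R := ℤ) t) hcomb
  have hprod : (MvPolynomial.aeval (R := ℤ) t)
      (∏ i ∈ Finset.range r, ∏ j ∈ Finset.range i,
        (MvPolynomial.X i - MvPolynomial.X j : MvPolynomial ℕ ℤ) ^ (n i * n j)) =
      ∏ i ∈ Finset.range r, ∏ j ∈ Finset.range i, (t i - t j) ^ (n i * n j) := by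
    rw [map_prod]
    apply Finset.prod_congr rfl
    intro i _
    rw [map_prod]
    apply Finset.prod_congr rfl
    intro j _
    rw [map_pow, map_sub, MvPolynomial.aeval_X, MvPolynomial.aeval_X]
  have hDmap : (MvPolynomial.aeval (R := ℤ) t) D =
      Matrix.det (fun u v : Fin (∑ l ∈ Finset.range r, n l) =>
        (Nat.choose ((c v : ℕ)) (wt u) : R) * t (idx u) ^ (((c v : ℕ)) - wt u)) := by
    rw [hD]; refine (AlgHom.map_det _ _).trans ?_
    congr 1
    funext u v
    change (MvPolynomial.aeval (R := ℤ) t) (((Nat.choose ((c v : ℕ)) (wt u) : ℕ) : MvPolynomial ℕ ℤ) * (MvPolynomial.X (idx u)) ^ (((c v : ℕ)) - wt u)) = _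
    simp [AlgHom.mapMatrix_apply, Matrix.map_apply, map_mul, map_pow, map_natCast,
      MvPolynomial.aeval_X]
  rw [hprod, hDmap] at hmap
  exact hmap
end

section
/- Let B be a commutative ring which is complete with respect to the t-adic topologies induced by certain elements, G a finite group acting continuously on B[[x]] by continuous B-algebra automorphisms σ with σ(x) = x^σ = Σ_{j≥0} λ^σ_j x^j where B is complete with respect to λ^σ_0 and λ^σ_1 is invertible. Suppose for every g ∈ G with g ≠ e, the constant term λ^g_0 ∈ B is not a zero divisor. Then the ring of invariants satisfies B[[x]]^G = B[[Π_{g∈G} x^g]], i.e., every G-invariant power series is a power series in the product Π_{g∈G} x^g. -/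
open PowerSeries

section aux
variable {B : Type*} [CommRing B]

lemma aux_X_nzd : (X : PowerSeries B) ∈ nonZeroDivisors (PowerSeries B) := by
  rw [mem_nonZeroDivisors_iff_right]
  intro r hr
  ext n
  have := congrArg (coeff (n + 1)) hr
  rw [coeff_succ_mul_X, map_zero] at this
  simpa using this

lemma aux_iso_nzd {φ : PowerSeries B} (e : RingAut (PowerSeries B))
    (h : φ ∈ nonZeroDivisors (PowerSeries B)) : e φ ∈ nonZeroDivisors (PowerSeries B) := by
  rw [mem_nonZeroDivisors_iff_right]
  intro r hr
  have h1 : e.symm r * φ = 0 := by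
    apply e.injective
    simpa [mul_comm] using hr
  have h2 := congrArg e (mem_nonZeroDivisors_iff_right.mp h _ h1)
  simpa using h2

variable {G : Type*} [Group G] [Fintype G]

lemma aux_apply_mul (ρ : G →* RingAut (PowerSeries B)) (a b : G) (φ : PowerSeries B) :
    ρ (a * b) φ = ρ a (ρ b φ) := by
  rw [map_mul ρ]; rfl

lemma aux_dvd (ρ : G →* RingAut (PowerSeries B))
    (hnzd : ∀ g : G, g ≠ 1 → coeff 0 (ρ g X) ∈ nonZeroDivisors B)
    (f : PowerSeries B) (hf : ∀ g : G, ρ g f = f) (h0 : constantCoeff f = 0)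
    (S : Finset G) : (∏ g ∈ S, ρ g X) ∣ f := by
  classical
  induction S using Finset.induction_on with
  | empty => simpa using one_dvd f
  | @insert h S hhS IH =>
    obtain ⟨q, hq⟩ := IH
    rw [Finset.prod_insert hhS]
    have key : ρ h X ∣ q := by
      have e2 : constantCoeff (ρ h⁻¹ ((∏ g ∈ S, ρ g X) * q)) = 0 := by
        rw [← hq, hf h⁻¹, h0]
      have e3 : ρ h⁻¹ ((∏ g ∈ S, ρ g X) * q)
          = (∏ g ∈ S, ρ (h⁻¹ * g) X) * ρ h⁻¹ q := by
        rw [map_mul, map_prod]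
        congr 1
        exact Finset.prod_congr rfl fun g _ => (aux_apply_mul ρ h⁻¹ g X).symm
      rw [e3, map_mul, map_prod] at e2
      have hprod : (∏ g ∈ S, constantCoeff (ρ (h⁻¹ * g) X)) ∈ nonZeroDivisors B := by
        refine Submonoid.prod_mem _ fun g hg => ?_
        have hne : h⁻¹ * g ≠ 1 := by
          intro hc
          exact hhS (by rwa [inv_mul_eq_one.mp hc])
        simpa [coeff_zero_eq_constantCoeff] using hnzd _ hne
      have hc0 : constantCoeff (ρ h⁻¹ q) = 0 := mem_nonZeroDivisors_iff_right.mp hprod _ (by rwa [mul_comm] at e2)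
      obtain ⟨t, ht⟩ := X_dvd_iff.mpr hc0
      have hqq : ρ h (ρ h⁻¹ q) = q := by
        have h1 : ρ h * ρ h⁻¹ = 1 := by rw [← map_mul, mul_inv_cancel, map_one]
        calc ρ h (ρ h⁻¹ q) = (ρ h * ρ h⁻¹) q := rfl
          _ = q := by rw [h1]; rfl
      exact ⟨ρ h t, by rw [← hqq, ht, map_mul]⟩
    obtain ⟨t', ht'⟩ := key
    exact ⟨t', by rw [hq, ht']; ring⟩

end aux

/-- Theorem 5.5 ('Theorem G'): let a finite group `G` act continuously on `B[[x]]` by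
continuous `B`-algebra automorphisms `ρ g`, given by substitution `x ↦ x^g = Σ_j λ^g_j x^j`,
with `B` complete with respect to each `λ^g_0` and each `λ^g_1` invertible (continuity is
expressed by: `ρ g f` agrees `λ^g_0`-adically with the partial substitutions
`Σ_{l < m+k} f_l (x^g)^l`). If `λ^g_0` is not a zero divisor for every `g ≠ e`, then every
`G`-invariant power series is a power series in `Π_{g ∈ G} x^g`. -/
theorem invariants_of_continuous_finite_group_action
    {B : Type*} [CommRing B] {G : Type*} [Group G] [Fintype G]
    (ρ : G →* RingAut (PowerSeries B))
    (hlin : ∀ (g : G) (b : B), ρ g (C b) = C b)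
    (hcomplete : ∀ g : G, IsAdicComplete (Ideal.span {coeff 0 (ρ g X)}) B)
    (hunit : ∀ g : G, IsUnit (coeff 1 (ρ g X)))
    (hcont : ∀ (g : G) (f : PowerSeries B) (m k : ℕ),
      (coeff 0 (ρ g X)) ^ k ∣
        coeff m (ρ g f - ∑ l ∈ Finset.range (m + k), C (coeff l f) * (ρ g X) ^ l))
    (hnzd : ∀ g : G, g ≠ 1 → coeff 0 (ρ g X) ∈ nonZeroDivisors B)
    (f : PowerSeries B) (hf : ∀ g : G, ρ g f = f) :
    ∃ γ : ℕ → B, ∀ m : ℕ,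
      coeff m f =
        ∑ j ∈ Finset.range (m + 1), γ j * coeff m ((∏ g : G, ρ g X) ^ j) := by
  classical
  set P : PowerSeries B := ∏ g : G, ρ g X with hP
  -- P is invariant
  have hPinv : ∀ h : G, ρ h P = P := by
    intro h
    rw [hP, map_prod]
    exact Fintype.prod_equiv (Equiv.mulLeft h) _ _
      (fun g => by rw [← aux_apply_mul ρ h g X]; rfl)
  -- P is a nonzerodivisor
  have hPnzd : P ∈ nonZeroDivisors (PowerSeries B) :=
    Submonoid.prod_mem _ fun g _ => aux_iso_nzd (ρ g) aux_X_nzd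
  -- division step
  have key : ∀ q : PowerSeries B, (∀ g : G, ρ g q = q) →
      ∃ q', (∀ g : G, ρ g q' = q') ∧ q = C (constantCoeff q) + P * q' := by
    intro q hq
    set q0 : PowerSeries B := q - C (constantCoeff q) with hq0
    have hq0inv : ∀ g : G, ρ g q0 = q0 := fun g => by
      rw [hq0, map_sub, hq g, hlin]
    have h00 : constantCoeff q0 = 0 := by simp [hq0]
    obtain ⟨q', hq'⟩ := aux_dvd ρ hnzd q0 hq0inv h00 Finset.univ
    refine ⟨q', fun g => ?_, by rw [← hq', hq0]; ring⟩
    have : P * ρ g q' = P * q' := by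
      calc P * ρ g q' = ρ g (P * q') := by rw [map_mul, hPinv]
        _ = q0 := by rw [← hq', hq0inv]
        _ = P * q' := hq'
    exact (mul_cancel_left_mem_nonZeroDivisors hPnzd).mp this
  -- iterate
  let step : {s : PowerSeries B // ∀ g : G, ρ g s = s} →
      {s : PowerSeries B // ∀ g : G, ρ g s = s} :=
    fun s => ⟨(key s.1 s.2).choose, (key s.1 s.2).choose_spec.1⟩
  let F : ℕ → {s : PowerSeries B // ∀ g : G, ρ g s = s} := fun n => step^[n] ⟨f, hf⟩
  refine ⟨fun n => constantCoeff (F n).1, fun m => ?_⟩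
  have hstep : ∀ n : ℕ, (F n).1 = C (constantCoeff (F n).1) + P * (F (n + 1)).1 := by
    intro n
    have hFs : F (n + 1) = step (F n) := Function.iterate_succ_apply' step n _
    rw [hFs]
    exact (key (F n).1 (F n).2).choose_spec.2
  have main : ∀ j : ℕ,
      f = (∑ i ∈ Finset.range j, C (constantCoeff (F i).1) * P ^ i) + P ^ j * (F j).1 := by
    intro j
    induction j with
    | zero => simp [F]
    | succ j IH =>
      rw [IH, hstep j, Finset.sum_range_succ]
      ring
  have hXP : (X : PowerSeries B) ∣ P := by
    rw [X_dvd_iff, hP, map_prod]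
    refine Finset.prod_eq_zero (Finset.mem_univ 1) ?_
    rw [map_one ρ]
    exact constantCoeff_X
  have hzero : coeff m (P ^ (m + 1) * (F (m + 1)).1) = 0 := by
    obtain ⟨c, hc⟩ := hXP
    refine (X_pow_dvd_iff.mp ⟨c ^ (m + 1) * (F (m + 1)).1, ?_⟩) m (by omega : m < m + 1)
    rw [hc, mul_pow]
    ring
  have := congrArg (coeff m) (main (m + 1))
  rw [map_add, hzero, add_zero, map_sum] at this
  rw [this]
  refine Finset.sum_congr rfl fun i _ => ?_
  rw [coeff_C_mul]
end

section
/- Let R be a commutative ring with elements t_1, …, t_r such that R is t_i-adically complete for each i, the t_i are not zero divisors, and t_i - t_j is not a zero divisor for i ≠ j. Suppose f(x) ∈ R[[x]] satisfies f(x) ∈ (x)^k and f(t_i + y) ∈ (y)^{n_i} for all i, where N = Σ n_i. Then the coefficient α_k of x^k in f can be expressed as an R-linear combination of the coefficients α_l with l ≥ k + N, in which every coefficient of the linear combination is divisible by Π_{i=1}^r t_i^{n_i} (the infinite sums converging t_i-adically). -/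
open Finset

namespace LeadingCoeffAux

variable {R : Type*} [CommRing R]

/-- Partial sums of `u` starting at index `b`. -/
def P (u : ℕ → R) (b L : ℕ) : R := ∑ l ∈ Finset.Ico b L, u l

theorem P_sub {u : ℕ → R} {b L1 L2 : ℕ} (h1 : b ≤ L1) (h2 : L1 ≤ L2) :
    P u b L2 - P u b L1 = ∑ l ∈ Finset.Ico L1 L2, u l := by
  rw [P, P, ← Finset.sum_Ico_consecutive _ h1 h2]; ring

/-- `s L` tends to `x` in the `a`-adic topology. -/
def Tends (a : R) (s : ℕ → R) (x : R) : Prop :=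
  ∀ m : ℕ, ∃ L : ℕ, ∀ L', L ≤ L' → a ^ m ∣ x - s L'

theorem smodeq_iff_dvd {a : R} {m : ℕ} {x y : R} :
    x ≡ y [SMOD ((Ideal.span {a}) ^ m • ⊤ : Submodule R R)] ↔ a ^ m ∣ x - y := by
  rw [SModEq.sub_mem]
  have : ((Ideal.span {a}) ^ m • ⊤ : Submodule R R) = (Ideal.span {a ^ m} : Ideal R) := by
    rw [Ideal.smul_eq_mul, Ideal.mul_top, Ideal.span_singleton_pow]
  rw [this, Ideal.mem_span_singleton]

theorem Tends.unique {a : R} (hH : IsHausdorff (Ideal.span {a}) R) {s : ℕ → R} {x y : R}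
    (hx : Tends a s x) (hy : Tends a s y) : x = y := by
  have key : ∀ m : ℕ, a ^ m ∣ x - y := by
    intro m
    obtain ⟨L1, h1⟩ := hx m
    obtain ⟨L2, h2⟩ := hy m
    have d1 := h1 (max L1 L2) (le_max_left _ _)
    have d2 := h2 (max L1 L2) (le_max_right _ _)
    have : x - y = (x - s (max L1 L2)) - (y - s (max L1 L2)) := by ring
    rw [this]; exact dvd_sub d1 d2
  have : x - y = 0 := by
    refine hH.haus _ (fun m => ?_)
    rw [smodeq_iff_dvd, sub_zero]; exact key m
  exact sub_eq_zero.mp this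

theorem exists_tends {a : R} (hP : IsPrecomplete (Ideal.span {a}) R)
    (u : ℕ → R) (b : ℕ) (hu : ∀ l, a ^ (l - b) ∣ u l) :
    ∃ x, Tends a (P u b) x := by
  have cauchy : ∀ {m n : ℕ}, m ≤ n → (fun m => P u b (b + m)) m ≡ (fun m => P u b (b + m)) n
      [SMOD ((Ideal.span {a}) ^ m • ⊤ : Submodule R R)] := by
    intro m n hmn
    rw [smodeq_iff_dvd]
    have : P u b (b + m) - P u b (b + n) = -(P u b (b + n) - P u b (b + m)) := by ring
    rw [this, dvd_neg, P_sub (Nat.le_add_right _ _) (by omega)]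
    refine Finset.dvd_sum (fun l hl => ?_)
    rw [Finset.mem_Ico] at hl
    exact dvd_trans (pow_dvd_pow a (by omega)) (hu l)
  obtain ⟨x, hx⟩ := hP.prec cauchy
  refine ⟨x, fun m => ⟨b + m, fun L' hL' => ?_⟩⟩
  have h1 : a ^ m ∣ x - P u b (b + m) := by
    have := (hx m).symm
    rw [smodeq_iff_dvd] at this
    exact this
  have h2 : a ^ m ∣ P u b L' - P u b (b + m) := by
    rw [P_sub (Nat.le_add_right _ _) hL']
    refine Finset.dvd_sum (fun l hl => ?_)
    rw [Finset.mem_Ico] at hl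
    exact dvd_trans (pow_dvd_pow a (by omega)) (hu l)
  have : x - P u b L' = (x - P u b (b + m)) - (P u b L' - P u b (b + m)) := by ring
  rw [this]; exact dvd_sub h1 h2

theorem Tends.tail {a : R} {u : ℕ → R} {b : ℕ} {x : R}
    (hu : ∀ l, a ^ (l - b) ∣ u l) (hx : Tends a (P u b) x) (m : ℕ) :
    a ^ m ∣ x - P u b (b + m) := by
  obtain ⟨L, hL⟩ := hx m
  set L' := max L (b + m) with hL'
  have h1 : a ^ m ∣ x - P u b L' := hL L' (le_max_left _ _)
  have h2 : a ^ m ∣ P u b L' - P u b (b + m) := by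
    rw [P_sub (Nat.le_add_right _ _) (le_max_right _ _)]
    refine Finset.dvd_sum (fun l hl => ?_)
    rw [Finset.mem_Ico] at hl
    exact dvd_trans (pow_dvd_pow a (by omega)) (hu l)
  have : x - P u b (b + m) = (x - P u b L') + (P u b L' - P u b (b + m)) := by ring
  rw [this]; exact dvd_add h1 h2

theorem Tends.congr {a : R} {s s' : ℕ → R} {x : R} (h : Tends a s x) (L0 : ℕ)
    (he : ∀ L, L0 ≤ L → s L = s' L) : Tends a s' x := by
  intro m
  obtain ⟨L, hL⟩ := h m
  exact ⟨max L L0, fun L' hL' => by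
    rw [← he L' (le_trans (le_max_right _ _) hL')]
    exact hL L' (le_trans (le_max_left _ _) hL')⟩

theorem Tends.add {a : R} {s s' : ℕ → R} {x x' : R} (h : Tends a s x) (h' : Tends a s' x') :
    Tends a (fun L => s L + s' L) (x + x') := by
  intro m
  obtain ⟨L1, h1⟩ := h m
  obtain ⟨L2, h2⟩ := h' m
  refine ⟨max L1 L2, fun L' hL' => ?_⟩
  have d1 := h1 L' (le_trans (le_max_left _ _) hL')
  have d2 := h2 L' (le_trans (le_max_right _ _) hL')
  have : x + x' - (s L' + s' L') = (x - s L') + (x' - s' L') := by ring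
  rw [this]; exact dvd_add d1 d2

theorem Tends.const_mul {a : R} {s : ℕ → R} {x : R} (c : R) (h : Tends a s x) :
    Tends a (fun L => c * s L) (c * x) := by
  intro m
  obtain ⟨L, hL⟩ := h m
  refine ⟨L, fun L' hL' => ?_⟩
  have : c * x - c * s L' = c * (x - s L') := by ring
  rw [this]; exact Dvd.dvd.mul_left (hL L' hL') c

theorem Tends.neg {a : R} {s : ℕ → R} {x : R} (h : Tends a s x) :
    Tends a (fun L => -(s L)) (-x) := by
  have := h.const_mul (-1)
  simpa using this

theorem Tends.sub {a : R} {s s' : ℕ → R} {x x' : R} (h : Tends a s x) (h' : Tends a s' x') :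
    Tends a (fun L => s L - s' L) (x - x') := by
  have := h.add h'.neg
  simpa [sub_eq_add_neg] using this

theorem Tends.const {a : R} (x : R) : Tends a (fun _ => x) x := by
  intro m; exact ⟨0, fun L' _ => by simp⟩

theorem Tends.shift {a : R} {s : ℕ → R} {x : R} (c : ℕ) (h : Tends a s x) :
    Tends a (fun L => s (L - c)) x := by
  intro m
  obtain ⟨L, hL⟩ := h m
  exact ⟨L + c, fun L' hL' => hL (L' - c) (by omega)⟩

/-- Bridge: if the `(b+m)`-th partial sums are divisible by `a^m`, the series tends to `0`. -/
theorem tends_zero_of_div {a : R} (hC : IsAdicComplete (Ideal.span {a}) R)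
    {u : ℕ → R} {b : ℕ} (hu : ∀ l, a ^ (l - b) ∣ u l)
    (h : ∀ m, a ^ m ∣ P u b (b + m)) : Tends a (P u b) 0 := by
  obtain ⟨x, hx⟩ := exists_tends hC.toIsPrecomplete u b hu
  have hx0 : x = 0 := by
    refine hC.toIsHausdorff.haus _ (fun m => ?_)
    rw [smodeq_iff_dvd, sub_zero]
    have h1 := hx.tail hu m
    have : x = (x - P u b (b + m)) + P u b (b + m) := by ring
    rw [this]; exact dvd_add h1 (h m)
  rwa [hx0] at hx

theorem div_of_tends_zero {a : R} {u : ℕ → R} {b : ℕ}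
    (hu : ∀ l, a ^ (l - b) ∣ u l) (h : Tends a (P u b) 0) (m : ℕ) :
    a ^ m ∣ P u b (b + m) := by
  have := h.tail hu m
  rw [zero_sub, dvd_neg] at this
  exact this

/-- Triangle sum swap. -/
theorem sum_triangle (F : ℕ → ℕ → R) (B L : ℕ) :
    ∑ m ∈ Finset.Ico B L, ∑ l ∈ Finset.Ico B m, F l m
      = ∑ l ∈ Finset.Ico B L, ∑ m ∈ Finset.Ico (l + 1) L, F l m :=
  (Finset.sum_Ico_Ico_comm' B L (fun l m => F l m)).symm

/-- Shift of summation index. -/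
theorem sum_Ico_succ_succ (f : ℕ → R) (a b : ℕ) :
    ∑ l ∈ Finset.Ico (a + 1) (b + 1), f l = ∑ l ∈ Finset.Ico a b, f (l + 1) := by
  rw [Finset.sum_Ico_eq_sum_range, Finset.sum_Ico_eq_sum_range]
  simp only [Nat.succ_sub_succ]
  refine Finset.sum_congr rfl (fun i _ => ?_)
  congr 1
  omega

theorem aux (r : ℕ) (t : Fin r → R)
    (ht : ∀ i, t i ∈ nonZeroDivisors R)
    (htt : ∀ i j, i ≠ j → t i - t j ∈ nonZeroDivisors R)
    (hcomplete : ∀ i, IsAdicComplete (Ideal.span {t i}) R)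
    (k : ℕ) (N : ℕ) :
    ∀ n : Fin r → ℕ, (∑ i, n i) = N → ∀ α : ℕ → R,
      (∀ l, l < k → α l = 0) →
      (∀ i, ∀ j, j < n i → ∀ m : ℕ,
        (t i) ^ m ∣ ∑ l ∈ Finset.Ico j (j + m), (Nat.choose l j : R) * (t i) ^ (l - j) * α l) →
      ∃ c : ℕ → R,
        (∀ l, (∏ i, t i ^ n i) ∣ c l) ∧
        (∀ l, c l ∈ (Ideal.span (Set.range t)) ^ (l - (k + N))) ∧
        (∀ m : ℕ, ∃ L : ℕ, ∀ L', L ≤ L' →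
          α k - ∑ l ∈ Finset.Ico (k + N) L', c l * α l ∈ (Ideal.span (Set.range t)) ^ m) := by
  induction N with
  | zero =>
    intro n hn α hk hsub
    refine ⟨fun l => if l = k then 1 else 0, ?_, ?_, ?_⟩
    · intro l
      have hnz : ∀ i, n i = 0 := fun i =>
        (Finset.sum_eq_zero_iff.mp hn) i (Finset.mem_univ i)
      simp [hnz]
    · intro l
      by_cases hl : l = k
      · subst hl; simp
      · simp [hl]
    · intro m
      refine ⟨k + 1, fun L' hL' => ?_⟩
      have : ∑ l ∈ Finset.Ico (k + 0) L', (if l = k then (1:R) else 0) * α l = α k := by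
        simp only [ite_mul, one_mul, zero_mul, Nat.add_zero]
        rw [Finset.sum_ite_eq' (Finset.Ico k L') k α]
        rw [if_pos (Finset.mem_Ico.mpr ⟨le_refl k, by omega⟩)]
      rw [this, sub_self]
      exact zero_mem _
  | succ N IH =>
    intro n hn α hk hsub
    have hex : ∃ i0, n i0 ≠ 0 := by
      by_contra h
      push_neg at h
      rw [Finset.sum_eq_zero (fun i _ => h i)] at hn
      omega
    obtain ⟨i0, hi0⟩ := hex
    have hpre := (hcomplete i0).toIsPrecomplete
    have hhaus := (hcomplete i0).toIsHausdorff
    -- the division limits B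
    have hBex : ∀ l : ℕ, ∃ x, Tends (t i0) (P (fun m => t i0 ^ (m - l) * α m) l) x :=
      fun l => exists_tends hpre _ l (fun m => dvd_mul_right _ _)
    choose B hB using hBex
    have hB0 : B 0 = 0 := by
      have h0 : Tends (t i0) (P (fun m => t i0 ^ (m - 0) * α m) 0) 0 := by
        refine tends_zero_of_div (hcomplete i0) (fun m => dvd_mul_right _ _) (fun m => ?_)
        have h1 := hsub i0 0 (by omega) m
        have heq : P (fun m' => t i0 ^ (m' - 0) * α m') 0 (0 + m)
            = ∑ l ∈ Finset.Ico 0 (0 + m), (Nat.choose l 0 : R) * t i0 ^ (l - 0) * α l := by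
          refine Finset.sum_congr rfl (fun l _ => ?_)
          simp
        rw [heq]
        exact h1
      exact (hB 0).unique hhaus h0
    have hrec : ∀ l, B l = α l + t i0 * B (l + 1) := by
      intro l
      have h1 : Tends (t i0) (fun L => α l + t i0 * P (fun m => t i0 ^ (m - (l+1)) * α m) (l+1) L)
          (α l + t i0 * B (l+1)) := (Tends.const (α l)).add ((hB (l+1)).const_mul (t i0))
      have h2 : Tends (t i0) (P (fun m => t i0 ^ (m - l) * α m) l) (α l + t i0 * B (l + 1)) := by
        refine h1.congr (l + 1) (fun L hL => ?_)
        show α l + t i0 * P (fun m => t i0 ^ (m - (l+1)) * α m) (l+1) L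
            = P (fun m => t i0 ^ (m - l) * α m) l L
        rw [P, P, Finset.sum_eq_sum_Ico_succ_bot (show l < L by omega), Nat.sub_self,
          pow_zero, one_mul, Finset.mul_sum]
        congr 1
        refine Finset.sum_congr rfl (fun m hm => ?_)
        rw [Finset.mem_Ico] at hm
        have h3 : m - l = (m - (l + 1)) + 1 := by omega
        rw [h3, pow_succ]
        ring
      exact (hB l).unique hhaus h2
    have hBk : ∀ l, l ≤ k → B l = 0 := by
      intro l
      induction l with
      | zero => intro _; exact hB0
      | succ l IHl =>
        intro hlk
        have h1 : B l = 0 := IHl (by omega)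
        have h2 : α l = 0 := hk l (by omega)
        have h3 : t i0 * B (l + 1) = 0 := by
          have h4 := hrec l
          rw [h1, h2, zero_add] at h4
          exact h4.symm
        refine (mem_nonZeroDivisors_iff.mp (ht i0)).2 (B (l+1)) ?_
        rw [mul_comm]
        exact h3
    have hαB : ∀ l, α l = B l - t i0 * B (l + 1) := fun l => by rw [hrec l]; ring
    set n' : Fin r → ℕ := Function.update n i0 (n i0 - 1) with hn'
    have hn'i0 : n' i0 = n i0 - 1 := Function.update_self _ _ _
    have hn'ne : ∀ i, i ≠ i0 → n' i = n i := fun i hi => Function.update_of_ne hi _ _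
    have hn'sum : (∑ i, n' i) = N := by
      rw [hn', Finset.sum_update_of_mem (Finset.mem_univ i0)]
      have h1 : n i0 + ∑ i ∈ Finset.univ \ {i0}, n i = N + 1 := by
        rw [← Finset.erase_eq, Finset.add_sum_erase _ n (Finset.mem_univ i0)]
        exact hn
      omega
    -- limits of the Hasse-derivative series of the divided power series
    have hGex : ∀ (i : Fin r) (j : ℕ),
        ∃ x, Tends (t i) (P (fun l => (Nat.choose l j : R) * t i ^ (l - j) * B (l + 1)) j) x :=
      fun i j => exists_tends (hcomplete i).toIsPrecomplete _ j
        (fun l => ((dvd_refl ((t i) ^ (l - j))).mul_left _).mul_right _)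
    choose G hG using hGex
    have hF : ∀ (i : Fin r) (j : ℕ), j < n i →
        Tends (t i) (P (fun l => (Nat.choose l j : R) * t i ^ (l - j) * α l) j) 0 := by
      intro i j hj
      refine tends_zero_of_div (hcomplete i)
        (fun l => ((dvd_refl ((t i) ^ (l - j))).mul_left _).mul_right _) (fun m => ?_)
      exact hsub i j hj m
    -- the key partial-sum identity
    have hkey : ∀ (i : Fin r) (j L : ℕ),
        P (fun l => (Nat.choose l j : R) * t i ^ (l - j) * α l) j L
          = t i * P (fun l => (Nat.choose l j : R) * t i ^ (l - j) * B (l + 1)) j (L - 1)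
            + (if j = 0 then 0 else
                P (fun l => (Nat.choose l (j-1) : R) * t i ^ (l - (j-1)) * B (l + 1)) (j-1) (L - 1))
            - t i0 * P (fun l => (Nat.choose l j : R) * t i ^ (l - j) * B (l + 1)) j L := by
      intro i j L
      have hsplit : P (fun l => (Nat.choose l j : R) * t i ^ (l - j) * α l) j L
          = (∑ l ∈ Finset.Ico j L, (Nat.choose l j : R) * t i ^ (l - j) * B l)
            - t i0 * P (fun l => (Nat.choose l j : R) * t i ^ (l - j) * B (l + 1)) j L := by
        rw [P, P, Finset.mul_sum, ← Finset.sum_sub_distrib]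
        refine Finset.sum_congr rfl (fun l _ => ?_)
        rw [hαB l]
        ring
      rw [hsplit]
      congr 1
      -- now the identity for the sum over `B l`
      cases L with
      | zero =>
        have e : ∀ (b : ℕ), Finset.Ico b 0 = ∅ := fun b => Finset.Ico_eq_empty (by omega)
        simp [P, e]
      | succ L' =>
        simp only [Nat.succ_eq_add_one, Nat.add_sub_cancel]
        cases j with
        | zero =>
          rw [if_pos rfl, add_zero]
          rw [Finset.sum_eq_sum_Ico_succ_bot (Nat.succ_pos L'), hB0, mul_zero, zero_add]
          rw [sum_Ico_succ_succ]
          rw [P, Finset.mul_sum]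
          refine Finset.sum_congr rfl (fun l hl => ?_)
          simp only [Nat.choose_zero_right, Nat.cast_one, one_mul, Nat.sub_zero]
          rw [pow_succ]
          ring
        | succ j' =>
          rw [if_neg (Nat.succ_ne_zero j'), Nat.add_sub_cancel]
          rw [sum_Ico_succ_succ]
          have hterm : ∀ l ∈ Finset.Ico j' L',
              (Nat.choose (l+1) (j'+1) : R) * t i ^ ((l+1) - (j'+1)) * B ((l+1))
                = (Nat.choose l (j'+1) : R) * t i ^ (l - j') * B (l + 1)
                  + (Nat.choose l j' : R) * t i ^ (l - j') * B (l + 1) := by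
            intro l hl
            rw [Nat.choose_succ_succ' l j', Nat.add_sub_add_right, Nat.cast_add]
            ring
          refine Eq.trans (Finset.sum_congr rfl hterm) ?_
          rw [Finset.sum_add_distrib]
          congr 1
          · -- ∑ C(l,j'+1) t^{l-j'} B(l+1) = t i * P ... (j'+1) L'
            rcases lt_or_ge j' L' with hjL | hjL
            · rw [Finset.sum_eq_sum_Ico_succ_bot hjL]
              rw [show (Nat.choose j' (j'+1) : R) = 0 by
                rw [Nat.choose_eq_zero_of_lt (by omega)]; simp]
              rw [zero_mul, zero_mul, zero_add, P, Finset.mul_sum]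
              refine Finset.sum_congr rfl (fun l hl => ?_)
              rw [Finset.mem_Ico] at hl
              have h5 : l - j' = (l - (j' + 1)) + 1 := by omega
              rw [h5, pow_succ]
              ring
            · rw [Finset.Ico_eq_empty (by omega), P, Finset.Ico_eq_empty (by omega)]
              simp
    -- the limit identity
    have hEq : ∀ (i : Fin r) (j : ℕ), j < n i →
        (0 : R) = t i * G i j + (if j = 0 then 0 else G i (j - 1)) - t i0 * G i j := by
      intro i j hj
      have h1 : Tends (t i)
          (fun L => t i * P (fun l => (Nat.choose l j : R) * t i ^ (l - j) * B (l + 1)) j (L - 1))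
          (t i * G i j) := ((hG i j).shift 1).const_mul (t i)
      have h2 : Tends (t i)
          (fun L => if j = 0 then (0:R) else
            P (fun l => (Nat.choose l (j-1) : R) * t i ^ (l - (j-1)) * B (l + 1)) (j-1) (L - 1))
          (if j = 0 then 0 else G i (j - 1)) := by
        cases j with
        | zero => simpa using Tends.const (0:R)
        | succ j' => simpa using ((hG i (j'+1-1)).shift 1)
      have h3 : Tends (t i)
          (fun L => t i0 * P (fun l => (Nat.choose l j : R) * t i ^ (l - j) * B (l + 1)) j L)
          (t i0 * G i j) := (hG i j).const_mul (t i0)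
      have h4 := (h1.add h2).sub h3
      have h5 : Tends (t i) (P (fun l => (Nat.choose l j : R) * t i ^ (l - j) * α l) j)
          (t i * G i j + (if j = 0 then 0 else G i (j - 1)) - t i0 * G i j) :=
        h4.congr 0 (fun L _ => (hkey i j L).symm)
      exact (hF i j hj).unique (hcomplete i).toIsHausdorff h5
    -- vanishing of the limits
    have hG0 : ∀ i j, j < n' i → G i j = 0 := by
      intro i j hj
      by_cases hii : i = i0
      · have hj' : j + 1 < n i0 := by
          rw [hii, hn'i0] at hj
          omega
        have h1 := hEq i0 (j+1) hj'
        rw [if_neg (Nat.succ_ne_zero j), Nat.add_sub_cancel] at h1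
        rw [hii]
        linear_combination -h1
      · have key : ∀ j', j' < n i → G i j' = 0 := by
          intro j'
          induction j' with
          | zero =>
            intro h0
            have h1 := hEq i 0 h0
            rw [if_pos rfl, add_zero] at h1
            refine (mem_nonZeroDivisors_iff.mp (htt i i0 hii)).2 (G i 0) ?_
            linear_combination -h1
          | succ j'' IHj =>
            intro hsj
            have h1 : G i j'' = 0 := IHj (by omega)
            have h2 := hEq i (j''+1) hsj
            rw [if_neg (Nat.succ_ne_zero j''), Nat.add_sub_cancel, h1] at h2
            refine (mem_nonZeroDivisors_iff.mp (htt i i0 hii)).2 (G i (j''+1)) ?_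
            linear_combination -h2
        exact key j (by rwa [hn'ne i hii] at hj)
    -- the induction hypotheses for the divided series
    have hk' : ∀ l, l < k → B (l + 1) = 0 := fun l hl => hBk (l+1) (by omega)
    have hsub' : ∀ i, ∀ j, j < n' i → ∀ m : ℕ,
        (t i) ^ m ∣ ∑ l ∈ Finset.Ico j (j + m),
          (Nat.choose l j : R) * (t i) ^ (l - j) * B (l + 1) := by
      intro i j hj m
      have h0 : Tends (t i) (P (fun l => (Nat.choose l j : R) * t i ^ (l - j) * B (l + 1)) j) 0 := by
        have h1 := hG i j
        rwa [hG0 i j hj] at h1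
      exact div_of_tends_zero
        (fun l => ((dvd_refl ((t i) ^ (l - j))).mul_left _).mul_right _) h0 m
    obtain ⟨c', hc'div, hc'mem, hc'conv⟩ := IH n' hn'sum (fun l => B (l + 1)) hk' hsub'
    -- facts about the ideal J and products
    have htJ : t i0 ∈ Ideal.span (Set.range t) := Ideal.subset_span ⟨i0, rfl⟩
    have hspanle : Ideal.span {t i0} ≤ Ideal.span (Set.range t) := by
      rw [Ideal.span_le]
      intro x hx
      rw [Set.mem_singleton_iff] at hx
      subst hx
      exact htJ
    have hprod : (∏ i, t i ^ n i) = t i0 * ∏ i, t i ^ n' i := by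
      rw [← Finset.mul_prod_erase Finset.univ (fun i => t i ^ n i) (Finset.mem_univ i0),
          ← Finset.mul_prod_erase Finset.univ (fun i => t i ^ n' i) (Finset.mem_univ i0)]
      have h1 : ∏ i ∈ Finset.univ.erase i0, t i ^ n' i
          = ∏ i ∈ Finset.univ.erase i0, t i ^ n i :=
        Finset.prod_congr rfl (fun i hi => by rw [hn'ne i (Finset.mem_erase.mp hi).1])
      rw [h1, hn'i0, ← mul_assoc, ← pow_succ']
      rw [show n i0 - 1 + 1 = n i0 from by omega]
    -- the coefficients
    refine ⟨fun m' => -(t i0 * ∑ l ∈ Finset.Ico (k + N) m', c' l * t i0 ^ (m' - 1 - l)),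
      ?_, ?_, ?_⟩
    · intro l
      show (∏ i, t i ^ n i) ∣
        -(t i0 * ∑ l' ∈ Finset.Ico (k + N) l, c' l' * t i0 ^ (l - 1 - l'))
      rw [hprod, dvd_neg]
      exact mul_dvd_mul_left (t i0) (Finset.dvd_sum (fun l' _ => (hc'div l').mul_right _))
    · intro l
      show -(t i0 * ∑ l' ∈ Finset.Ico (k + N) l, c' l' * t i0 ^ (l - 1 - l'))
        ∈ (Ideal.span (Set.range t)) ^ (l - (k + (N + 1)))
      refine neg_mem ?_
      by_cases hl : k + N < l
      · refine Ideal.mul_mem_left _ _ (Ideal.sum_mem _ (fun l' hl' => ?_))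
        rw [Finset.mem_Ico] at hl'
        have hmem : c' l' * t i0 ^ (l - 1 - l')
            ∈ (Ideal.span (Set.range t)) ^ ((l' - (k + N)) + (l - 1 - l')) := by
          rw [pow_add]
          exact Ideal.mul_mem_mul (hc'mem l') (Ideal.pow_mem_pow htJ _)
        exact Ideal.pow_le_pow_right (by omega) hmem
      · rw [Finset.Ico_eq_empty (by omega), Finset.sum_empty, mul_zero]
        exact zero_mem _
    · intro m
      obtain ⟨L1, hL1⟩ := hc'conv m
      refine ⟨L1 + (k + N + 1 + m), fun L' hL' => ?_⟩
      -- the tail bounds for B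
      have htail : ∀ l, k + N ≤ l → l < L' →
          B (l + 1) - ∑ m' ∈ Finset.Ico (l+1) L', t i0 ^ (m' - 1 - l) * α m'
            ∈ (Ideal.span (Set.range t)) ^ (L' - (l + 1)) := by
        intro l hl1 hl2
        have h1 := (hB (l+1)).tail (fun m' => dvd_mul_right _ _) (L' - (l + 1))
        rw [show (l + 1) + (L' - (l + 1)) = L' by omega] at h1
        have h2 : P (fun m' => t i0 ^ (m' - (l+1)) * α m') (l+1) L'
            = ∑ m' ∈ Finset.Ico (l+1) L', t i0 ^ (m' - 1 - l) * α m' := by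
          rw [P]
          refine Finset.sum_congr rfl (fun m' hm' => ?_)
          rw [Finset.mem_Ico] at hm'
          congr 2
          omega
        rw [h2] at h1
        have h3 : B (l + 1) - ∑ m' ∈ Finset.Ico (l+1) L', t i0 ^ (m' - 1 - l) * α m'
            ∈ Ideal.span {t i0} ^ (L' - (l + 1)) := by
          rw [Ideal.span_singleton_pow, Ideal.mem_span_singleton]
          exact h1
        exact Ideal.pow_right_mono hspanle _ h3
      -- rewrite the sum
      have hS1 : ∑ l ∈ Finset.Ico ((k + N) + 1) L',
            (-(t i0 * ∑ l' ∈ Finset.Ico (k + N) l, c' l' * t i0 ^ (l - 1 - l'))) * α l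
          = -(t i0 * ∑ l ∈ Finset.Ico (k + N) L',
              c' l * ∑ m' ∈ Finset.Ico (l+1) L', t i0 ^ (m' - 1 - l) * α m') := by
        have e1 : ∀ l, (-(t i0 * ∑ l' ∈ Finset.Ico (k + N) l, c' l' * t i0 ^ (l - 1 - l'))) * α l
            = ∑ l' ∈ Finset.Ico (k + N) l, -(t i0 * (c' l' * (t i0 ^ (l - 1 - l') * α l))) := by
          intro l
          rw [neg_mul, mul_assoc, Finset.sum_mul, Finset.mul_sum, ← Finset.sum_neg_distrib]
          refine Finset.sum_congr rfl (fun l' _ => ?_)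
          ring
        rw [Finset.sum_congr rfl (fun l _ => e1 l)]
        have e2 : ∑ l ∈ Finset.Ico ((k + N) + 1) L',
              ∑ l' ∈ Finset.Ico (k + N) l, -(t i0 * (c' l' * (t i0 ^ (l - 1 - l') * α l)))
            = ∑ l ∈ Finset.Ico (k + N) L',
              ∑ l' ∈ Finset.Ico (k + N) l, -(t i0 * (c' l' * (t i0 ^ (l - 1 - l') * α l))) := by
          rcases lt_or_ge (k + N) L' with h | h
          · rw [Finset.sum_eq_sum_Ico_succ_bot h]
            rw [Finset.Ico_self, Finset.sum_empty, zero_add]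
          · rw [Finset.Ico_eq_empty (by omega), Finset.Ico_eq_empty (by omega)]
        rw [e2, sum_triangle (fun l' l => -(t i0 * (c' l' * (t i0 ^ (l - 1 - l') * α l))))]
        have e3 : ∀ l' ∈ Finset.Ico (k + N) L',
            ∑ l ∈ Finset.Ico (l'+1) L', -(t i0 * (c' l' * (t i0 ^ (l - 1 - l') * α l)))
              = -(t i0 * (c' l' * ∑ m' ∈ Finset.Ico (l'+1) L', t i0 ^ (m' - 1 - l') * α m')) := by
          intro l' _
          rw [Finset.mul_sum, Finset.mul_sum, ← Finset.sum_neg_distrib]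
        refine Eq.trans (Finset.sum_congr rfl e3) ?_
        rw [Finset.sum_neg_distrib, ← Finset.mul_sum]
      -- per-term membership for the error sum
      have herr : ∑ l ∈ Finset.Ico (k + N) L',
            c' l * (B (l + 1) - ∑ m' ∈ Finset.Ico (l+1) L', t i0 ^ (m' - 1 - l) * α m')
          ∈ (Ideal.span (Set.range t)) ^ m := by
        refine Ideal.sum_mem _ (fun l hl => ?_)
        rw [Finset.mem_Ico] at hl
        have h1 : c' l * (B (l + 1) - ∑ m' ∈ Finset.Ico (l+1) L', t i0 ^ (m' - 1 - l) * α m')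
            ∈ (Ideal.span (Set.range t)) ^ ((l - (k + N)) + (L' - (l + 1))) := by
          rw [pow_add]
          exact Ideal.mul_mem_mul (hc'mem l) (htail l hl.1 hl.2)
        exact Ideal.pow_le_pow_right (by omega) h1
      have hIH : B (k + 1) - ∑ l ∈ Finset.Ico (k + N) L', c' l * B (l + 1)
          ∈ (Ideal.span (Set.range t)) ^ m := hL1 L' (by omega)
      have hαk : α k = -(t i0 * B (k + 1)) := by
        rw [hαB k, hBk k le_rfl]
        ring
      have hsplit2 : ∑ l ∈ Finset.Ico (k + N) L',
            c' l * (B (l + 1) - ∑ m' ∈ Finset.Ico (l+1) L', t i0 ^ (m' - 1 - l) * α m')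
          = (∑ l ∈ Finset.Ico (k + N) L', c' l * B (l + 1))
            - ∑ l ∈ Finset.Ico (k + N) L',
                c' l * ∑ m' ∈ Finset.Ico (l+1) L', t i0 ^ (m' - 1 - l) * α m' := by
        rw [← Finset.sum_sub_distrib]
        exact Finset.sum_congr rfl (fun l _ => by ring)
      have hid : α k - (-(t i0 * ∑ l ∈ Finset.Ico (k + N) L',
              c' l * ∑ m' ∈ Finset.Ico (l+1) L', t i0 ^ (m' - 1 - l) * α m'))
          = -(t i0 * (B (k + 1) - ∑ l ∈ Finset.Ico (k + N) L', c' l * B (l + 1)))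
            - t i0 * (∑ l ∈ Finset.Ico (k + N) L',
                c' l * (B (l + 1) - ∑ m' ∈ Finset.Ico (l+1) L', t i0 ^ (m' - 1 - l) * α m')) := by
        rw [hαk, hsplit2]
        ring
      show α k - ∑ l ∈ Finset.Ico ((k + N) + 1) L',
          (-(t i0 * ∑ l' ∈ Finset.Ico (k + N) l, c' l' * t i0 ^ (l - 1 - l'))) * α l
          ∈ (Ideal.span (Set.range t)) ^ m
      rw [hS1, hid]
      exact sub_mem (neg_mem (Ideal.mul_mem_left _ _ hIH)) (Ideal.mul_mem_left _ _ herr)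

end LeadingCoeffAux

/-- Strengthened conclusion of Lemma 5.1: under the hypotheses of the key divisibility
lemma, the coefficient `α_k` is an (infinite, `t`-adically convergent) `R`-linear
combination of the coefficients `α_l`, `l ≥ k + N` (`N = Σ n_i`), in which every
coefficient of the linear combination is divisible by `Π_i t_i^{n_i}`. -/
theorem leading_coeff_combination {R : Type*} [CommRing R]
    (r : ℕ) (t : Fin r → R)
    (ht : ∀ i, t i ∈ nonZeroDivisors R)
    (htt : ∀ i j, i ≠ j → t i - t j ∈ nonZeroDivisors R)
    (hcomplete : ∀ i, IsAdicComplete (Ideal.span {t i}) R)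
    (k : ℕ) (n : Fin r → ℕ) (α : ℕ → R)
    (hk : ∀ l, l < k → α l = 0)
    (hsub : ∀ i, ∀ j, j < n i → ∀ m : ℕ,
      (t i) ^ m ∣ ∑ l ∈ Finset.Ico j (j + m), (Nat.choose l j : R) * (t i) ^ (l - j) * α l) :
    ∃ c : ℕ → R,
      (∀ l, (∏ i, t i ^ n i) ∣ c l) ∧
      (∀ m : ℕ, ∃ L : ℕ, ∀ L' : ℕ, L ≤ L' →
        α k - ∑ l ∈ Finset.Ico (k + ∑ i, n i) L', c l * α l ∈
          (Ideal.span (Set.range t)) ^ m) := by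
  obtain ⟨c, hdiv, -, hconv⟩ :=
    LeadingCoeffAux.aux r t ht htt hcomplete k (∑ i, n i) n rfl α hk hsub
  exact ⟨c, hdiv, hconv⟩
end
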